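/- arXiv:1906.10933 — 3 statements merged into one kernel-verified Lean document; each statement's English description precedes it below -/
import Mathlib

section
/- Let X = X_1×…×X_d be an admissible space of d-dimensional random vectors such that, for every i ∈ {1,…,d}, the Köthe dual X'_i coincides with the norm dual of the Banach lattice X_i, and let E be an admissible space of random variables with Köthe dual E'. If a map S : X → E is monotone (X ≥ Y almost surely componentwise implies S(X) ≥ S(Y) almost surely) and concave, then for every W ∈ E'_+ the functional X ↦ E[S(X)W] is upper semicontinuous with respect to the weak topology σ(X,X'). -/
open MeasureTheory Filter Set
open scoped ENNReal

noncomputable section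

namespace SystemicRisk

variable {Ω : Type*} [MeasurableSpace Ω]

/-- A random variable is essentially bounded. -/
def EssBdd {μ : Measure Ω} (f : Ω →ₘ[μ] ℝ) : Prop :=
  ∃ C : ℝ, ∀ᵐ ω ∂μ, |f ω| ≤ C

/-- The scalar pairing `E[U W]`. -/
def ip {μ : Measure Ω} (U W : Ω →ₘ[μ] ℝ) : ℝ := ∫ ω, U ω * W ω ∂μ

/-- The Köthe dual of a set of random variables. -/
def kdual {μ : Measure Ω} (L : Set (Ω →ₘ[μ] ℝ)) : Set (Ω →ₘ[μ] ℝ) :=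
  {Z | ∀ f ∈ L, Integrable (fun ω => f ω * Z ω) μ}

/-- `nrm` is a Banach lattice norm on `L` (w.r.t. the a.s. order). -/
structure IsBLNorm {μ : Measure Ω} (L : Set (Ω →ₘ[μ] ℝ)) (nrm : (Ω →ₘ[μ] ℝ) → ℝ) : Prop where
  nonneg : ∀ f ∈ L, 0 ≤ nrm f
  eq_zero_iff : ∀ f ∈ L, (nrm f = 0 ↔ f = 0)
  smul_eq : ∀ f ∈ L, ∀ c : ℝ, nrm (c • f) = |c| * nrm f
  triangle : ∀ f ∈ L, ∀ g ∈ L, nrm (f + g) ≤ nrm f + nrm g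
  solid : ∀ f ∈ L, ∀ g ∈ L, |f| ≤ |g| → nrm f ≤ nrm g
  complete : ∀ u : ℕ → (Ω →ₘ[μ] ℝ), (∀ n, u n ∈ L) →
      (∀ ε : ℝ, 0 < ε → ∃ N : ℕ, ∀ m ≥ N, ∀ n ≥ N, nrm (u m - u n) < ε) →
      ∃ f ∈ L, ∀ ε : ℝ, 0 < ε → ∃ N : ℕ, ∀ n ≥ N, nrm (u n - f) < ε

/-- `L` is an admissible space: a linear subspace of `L^0` which is a Banach lattice
(for the a.s. order, with norm `nrm`) satisfying `L^∞ ⊆ L ⊆ L^1`. -/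
structure IsAdmissible {μ : Measure Ω} (L : Set (Ω →ₘ[μ] ℝ)) (nrm : (Ω →ₘ[μ] ℝ) → ℝ) : Prop where
  zero_mem : (0 : Ω →ₘ[μ] ℝ) ∈ L
  add_mem : ∀ f ∈ L, ∀ g ∈ L, f + g ∈ L
  smul_mem : ∀ (c : ℝ), ∀ f ∈ L, c • f ∈ L
  sup_mem : ∀ f ∈ L, ∀ g ∈ L, f ⊔ g ∈ L
  inf_mem : ∀ f ∈ L, ∀ g ∈ L, f ⊓ g ∈ L
  linfty_subset : ∀ f, EssBdd f → f ∈ L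
  subset_lone : ∀ f ∈ L, Integrable f μ
  banach : IsBLNorm L nrm

variable {d : ℕ}

/-- The product space `X = X_1 × ⋯ × X_d`. -/
def prodSet {μ : Measure Ω} (Li : Fin d → Set (Ω →ₘ[μ] ℝ)) : Set (Fin d → (Ω →ₘ[μ] ℝ)) :=
  {X | ∀ i, X i ∈ Li i}

/-- The vector pairing `E[⟨X,Z⟩] = ∑ i, E[X_i Z_i]`. -/
def pairing {μ : Measure Ω} (X Z : Fin d → (Ω →ₘ[μ] ℝ)) : ℝ := ∑ i, ip (X i) (Z i)

/-- The constant random vector associated with `m ∈ ℝ^d`. -/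
def cvec (μ : Measure Ω) (m : Fin d → ℝ) : Fin d → (Ω →ₘ[μ] ℝ) :=
  fun i => (AEEqFun.const Ω (m i) : Ω →ₘ[μ] ℝ)

/-- The weak topology `σ(P, D)` on a set of random vectors `P` induced by the pairing
with elements of `D`. -/
def wtop {μ : Measure Ω} (P D : Set (Fin d → (Ω →ₘ[μ] ℝ))) : TopologicalSpace ↥P :=
  TopologicalSpace.induced
    (fun X : ↥P => fun Z : ↥D => pairing (X : Fin d → (Ω →ₘ[μ] ℝ)) (Z : Fin d → (Ω →ₘ[μ] ℝ)))
    Pi.topologicalSpace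

/-- The weak topology `σ(P, D)` on a set of random variables `P` induced by the pairing
with elements of `D`. -/
def wtop1 {μ : Measure Ω} (P D : Set (Ω →ₘ[μ] ℝ)) : TopologicalSpace ↥P :=
  TopologicalSpace.induced
    (fun U : ↥P => fun W : ↥D => ip (U : Ω →ₘ[μ] ℝ) (W : Ω →ₘ[μ] ℝ))
    Pi.topologicalSpace

/-- An admissible impact map `S : X → E`. -/
structure IsAdmissibleImpact {μ : Measure Ω} (XX XX' : Set (Fin d → (Ω →ₘ[μ] ℝ)))
    (EE EE' : Set (Ω →ₘ[μ] ℝ)) (S : (Fin d → (Ω →ₘ[μ] ℝ)) → (Ω →ₘ[μ] ℝ)) : Prop where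
  mapsTo : ∀ X ∈ XX, S X ∈ EE
  nonconst : ∃ X ∈ XX, ∃ Y ∈ XX, S X ≠ S Y
  normalized : S 0 = 0
  mono : ∀ X ∈ XX, ∀ Y ∈ XX, X ≤ Y → S X ≤ S Y
  concave : ∀ X ∈ XX, ∀ Y ∈ XX, ∀ t : ℝ, 0 ≤ t → t ≤ 1 →
      t • S X + (1 - t) • S Y ≤ S (t • X + (1 - t) • Y)
  usc : ∀ W ∈ EE', (0 : Ω →ₘ[μ] ℝ) ≤ W →
      @UpperSemicontinuous (↥XX) ℝ (wtop XX XX') _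
        (fun X : ↥XX => ∫ ω, S (X : Fin d → (Ω →ₘ[μ] ℝ)) ω * W ω ∂μ)

/-- An admissible acceptance set `A ⊆ E` (relative to the impact map `S`). -/
structure IsAdmissibleAcceptance {μ : Measure Ω} (XX : Set (Fin d → (Ω →ₘ[μ] ℝ)))
    (EE EE' : Set (Ω →ₘ[μ] ℝ)) (S : (Fin d → (Ω →ₘ[μ] ℝ)) → (Ω →ₘ[μ] ℝ))
    (A : Set (Ω →ₘ[μ] ℝ)) : Prop where
  subset : A ⊆ EE
  preimage_nonempty : ∃ X ∈ XX, S X ∈ A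
  preimage_proper : ∃ X ∈ XX, S X ∉ A
  zero_mem : (0 : Ω →ₘ[μ] ℝ) ∈ A
  mono : ∀ U ∈ A, ∀ V ∈ EE, (0 : Ω →ₘ[μ] ℝ) ≤ V → U + V ∈ A
  convex : ∀ U ∈ A, ∀ V ∈ A, ∀ t : ℝ, 0 ≤ t → t ≤ 1 → t • U + (1 - t) • V ∈ A
  closed : @IsClosed (↥EE) (wtop1 EE EE') {U : ↥EE | (U : Ω →ₘ[μ] ℝ) ∈ A}

/-- The systemic acceptance set `S⁻¹(A) = {X ∈ X : S(X) ∈ A}`. -/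
def sysAcc {μ : Measure Ω} (XX : Set (Fin d → (Ω →ₘ[μ] ℝ)))
    (S : (Fin d → (Ω →ₘ[μ] ℝ)) → (Ω →ₘ[μ] ℝ)) (A : Set (Ω →ₘ[μ] ℝ)) :
    Set (Fin d → (Ω →ₘ[μ] ℝ)) :=
  {X ∈ XX | S X ∈ A}

/-- The "first allocate, then aggregate" systemic risk measure `ρ`. -/
def rho (μ : Measure Ω) (S : (Fin d → (Ω →ₘ[μ] ℝ)) → (Ω →ₘ[μ] ℝ)) (A : Set (Ω →ₘ[μ] ℝ))
    (X : Fin d → (Ω →ₘ[μ] ℝ)) : EReal :=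
  ⨅ m ∈ {m : Fin d → ℝ | S (X + cvec μ m) ∈ A}, ((∑ i, m i : ℝ) : EReal)

/-- The (lower) support function of a set of random vectors. -/
def suppV {μ : Measure Ω} (B : Set (Fin d → (Ω →ₘ[μ] ℝ))) (Z : Fin d → (Ω →ₘ[μ] ℝ)) : EReal :=
  ⨅ X ∈ B, ((pairing X Z : ℝ) : EReal)

/-- The barrier cone of a set of random vectors, inside the dual set `D`. -/
def barrV {μ : Measure Ω} (B D : Set (Fin d → (Ω →ₘ[μ] ℝ))) : Set (Fin d → (Ω →ₘ[μ] ℝ)) :=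
  {Z ∈ D | ⊥ < suppV B Z}

/-- The (lower) support function of a set of random variables. -/
def suppS {μ : Measure Ω} (A : Set (Ω →ₘ[μ] ℝ)) (W : Ω →ₘ[μ] ℝ) : EReal :=
  ⨅ U ∈ A, ((ip U W : ℝ) : EReal)

/-- The barrier cone of a set of random variables, inside the dual set `D`. -/
def barrS {μ : Measure Ω} (A D : Set (Ω →ₘ[μ] ℝ)) : Set (Ω →ₘ[μ] ℝ) :=
  {W ∈ D | ⊥ < suppS A W}

/-- The generic penalty function with dual variables `W` ranging over `K`. -/
def penalty {μ : Measure Ω} (XX : Set (Fin d → (Ω →ₘ[μ] ℝ)))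
    (A : Set (Ω →ₘ[μ] ℝ)) (S : (Fin d → (Ω →ₘ[μ] ℝ)) → (Ω →ₘ[μ] ℝ))
    (K : Set (Ω →ₘ[μ] ℝ)) (Z : Fin d → (Ω →ₘ[μ] ℝ)) : EReal :=
  ⨆ W ∈ K, (suppS A W +
    ⨅ X ∈ XX, ((pairing X Z - ∫ ω, S X ω * W ω ∂μ : ℝ) : EReal))

/-- a.s. strictly positive random variables. -/
def strictPos (μ : Measure Ω) : Set (Ω →ₘ[μ] ℝ) := {W | ∀ᵐ ω ∂μ, 0 < W ω}

/-- The penalty function `α`. -/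
def alpha {μ : Measure Ω} (XX : Set (Fin d → (Ω →ₘ[μ] ℝ))) (EE' : Set (Ω →ₘ[μ] ℝ))
    (A : Set (Ω →ₘ[μ] ℝ)) (S : (Fin d → (Ω →ₘ[μ] ℝ)) → (Ω →ₘ[μ] ℝ)) :
    (Fin d → (Ω →ₘ[μ] ℝ)) → EReal :=
  penalty XX A S (barrS A EE')

/-- The penalty function `α⁺`. -/
def alphaPlus {μ : Measure Ω} (XX : Set (Fin d → (Ω →ₘ[μ] ℝ))) (EE' : Set (Ω →ₘ[μ] ℝ))
    (A : Set (Ω →ₘ[μ] ℝ)) (S : (Fin d → (Ω →ₘ[μ] ℝ)) → (Ω →ₘ[μ] ℝ)) :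
    (Fin d → (Ω →ₘ[μ] ℝ)) → EReal :=
  penalty XX A S (barrS A EE' ∩ (strictPos μ ∪ {0}))

/-- a.s. strictly positive random vectors. -/
def strictPosV (μ : Measure Ω) (d : ℕ) : Set (Fin d → (Ω →ₘ[μ] ℝ)) :=
  {Z | ∀ i, ∀ᵐ ω ∂μ, 0 < Z i ω}

/-- The set `C` of nonnegative dual vectors with all components of expectation one. -/
def Cset {μ : Measure Ω} (XX' : Set (Fin d → (Ω →ₘ[μ] ℝ))) : Set (Fin d → (Ω →ₘ[μ] ℝ)) :=
  {Z ∈ XX' | (∀ i, (0 : Ω →ₘ[μ] ℝ) ≤ Z i) ∧ ∀ i, (∫ ω, Z i ω ∂μ) = 1}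

/-- A map with values in `[−∞,∞]` is proper on `P` if it never attains `−∞` on `P`
and is finite somewhere on `P`. -/
def ProperOn {β : Type*} (P : Set β) (f : β → EReal) : Prop :=
  (∀ x ∈ P, f x ≠ ⊥) ∧ ∃ x ∈ P, f x ≠ ⊤

/-- The positive part of an extended real number, as an extended nonnegative real. -/
def epos (x : EReal) : ℝ≥0∞ := if x = ⊤ then ⊤ else ENNReal.ofReal x.toReal

/-- The integral of an extended-real-valued function. -/
def eintegral (μ : Measure Ω) (g : Ω → EReal) : EReal :=
  ((∫⁻ ω, epos (g ω) ∂μ : ℝ≥0∞) : EReal) - ((∫⁻ ω, epos (-(g ω)) ∂μ : ℝ≥0∞) : EReal)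


variable {μ : Measure Ω}

/-! ### Helper lemmas on the a.s. order of `Ω →ₘ[μ] ℝ` -/

lemma Mle_iff {f g : Ω →ₘ[μ] ℝ} : f ≤ g ↔ ∀ᵐ ω ∂μ, f ω ≤ g ω :=
  AEEqFun.coeFn_le.symm

lemma Madd_le_add_left {a b : Ω →ₘ[μ] ℝ} (h : a ≤ b) (c : Ω →ₘ[μ] ℝ) : c + a ≤ c + b := by
  rw [Mle_iff] at h ⊢
  filter_upwards [AEEqFun.coeFn_add c a, AEEqFun.coeFn_add c b, h] with ω h1 h2 h3
  simp only [h1, h2, Pi.add_apply]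
  linarith

lemma Mneg_le_neg {a b : Ω →ₘ[μ] ℝ} (h : a ≤ b) : -b ≤ -a := by
  rw [Mle_iff] at h ⊢
  filter_upwards [AEEqFun.coeFn_neg a, AEEqFun.coeFn_neg b, h] with ω h1 h2 h3
  simp only [h1, h2, Pi.neg_apply]
  linarith

lemma Mneg_abs_le (a : Ω →ₘ[μ] ℝ) : -|a| ≤ a := by
  rw [Mle_iff]
  filter_upwards [AEEqFun.coeFn_neg |a|, AEEqFun.coeFn_abs a] with ω h1 h2
  rw [h1, Pi.neg_apply, h2]
  exact neg_abs_le _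

lemma Mabs_nonneg (a : Ω →ₘ[μ] ℝ) : 0 ≤ |a| := by
  rw [Mle_iff]
  filter_upwards [AEEqFun.coeFn_abs a, AEEqFun.coeFn_zero (β := ℝ) (μ := μ)] with ω h1 h2
  rw [h1, h2]
  exact abs_nonneg _

lemma Mabs_abs (a : Ω →ₘ[μ] ℝ) : |(|a| : Ω →ₘ[μ] ℝ)| = |a| := by
  refine AEEqFun.ext ?_
  filter_upwards [AEEqFun.coeFn_abs a, AEEqFun.coeFn_abs (|a| : Ω →ₘ[μ] ℝ)] with ω h1 h2
  rw [h2, h1, abs_abs]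

lemma Mabs_sup_sub_sup_le (a b c : Ω →ₘ[μ] ℝ) : |a ⊔ c - b ⊔ c| ≤ |a - b| := by
  rw [Mle_iff]
  filter_upwards [AEEqFun.coeFn_abs (a ⊔ c - b ⊔ c), AEEqFun.coeFn_abs (a - b),
    AEEqFun.coeFn_sub (a ⊔ c) (b ⊔ c), AEEqFun.coeFn_sub a b,
    AEEqFun.coeFn_sup a c, AEEqFun.coeFn_sup b c] with ω h1 h2 h3 h4 h5 h6
  rw [h1, h2, h3, h4, Pi.sub_apply, Pi.sub_apply, h5, h6]
  exact abs_sup_sub_sup_le_abs _ _ _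

lemma Mcoe_sum {ι : Type*} (s : Finset ι) (v : ι → (Ω →ₘ[μ] ℝ)) :
    (↑(∑ k ∈ s, v k) : Ω → ℝ) =ᵐ[μ] fun ω => ∑ k ∈ s, v k ω := by
  classical
  induction s using Finset.induction_on with
  | empty => simp only [Finset.sum_empty]; exact AEEqFun.coeFn_zero (β := ℝ) (μ := μ)
  | insert a s hx ih =>
    rw [Finset.sum_insert hx]
    filter_upwards [AEEqFun.coeFn_add (v a) (∑ k ∈ s, v k), ih] with ω h1 h2
    rw [h1, Pi.add_apply, h2, Finset.sum_insert hx]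

lemma Msingle_le_sum {ι : Type*} [Countable ι] {s : Finset ι} {v : ι → (Ω →ₘ[μ] ℝ)}
    (hv : ∀ k, 0 ≤ v k) {n : ι} (hn : n ∈ s) : v n ≤ ∑ k ∈ s, v k := by
  have hall : ∀ᵐ ω ∂μ, ∀ k, 0 ≤ v k ω := by
    rw [ae_all_iff]
    intro k
    have := Mle_iff.mp (hv k)
    filter_upwards [this, AEEqFun.coeFn_zero (β := ℝ) (μ := μ)] with ω h1 h2
    rw [h2] at h1; exact h1
  rw [Mle_iff]
  filter_upwards [Mcoe_sum s v, hall] with ω h1 h2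
  rw [h1]
  exact Finset.single_le_sum (fun k _ => h2 k) hn

/-! ### Norm helper lemmas -/

lemma mem_neg {L : Set (Ω →ₘ[μ] ℝ)} {nrm : (Ω →ₘ[μ] ℝ) → ℝ} (hA : IsAdmissible L nrm)
    {f : Ω →ₘ[μ] ℝ} (hf : f ∈ L) : -f ∈ L := by
  have := hA.smul_mem (-1) f hf; rwa [neg_one_smul] at this

lemma mem_sub {L : Set (Ω →ₘ[μ] ℝ)} {nrm : (Ω →ₘ[μ] ℝ) → ℝ} (hA : IsAdmissible L nrm)
    {f g : Ω →ₘ[μ] ℝ} (hf : f ∈ L) (hg : g ∈ L) : f - g ∈ L := by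
  rw [sub_eq_add_neg]; exact hA.add_mem _ hf _ (mem_neg hA hg)

lemma mem_abs {L : Set (Ω →ₘ[μ] ℝ)} {nrm : (Ω →ₘ[μ] ℝ) → ℝ} (hA : IsAdmissible L nrm)
    {f : Ω →ₘ[μ] ℝ} (hf : f ∈ L) : |f| ∈ L :=
  hA.sup_mem _ hf _ (mem_neg hA hf)

lemma nrm_zero {L : Set (Ω →ₘ[μ] ℝ)} {nrm : (Ω →ₘ[μ] ℝ) → ℝ} (hA : IsAdmissible L nrm) :
    nrm 0 = 0 := by
  have := hA.banach.smul_eq 0 hA.zero_mem 0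
  simpa using this

lemma nrm_neg {L : Set (Ω →ₘ[μ] ℝ)} {nrm : (Ω →ₘ[μ] ℝ) → ℝ} (hA : IsAdmissible L nrm)
    {f : Ω →ₘ[μ] ℝ} (hf : f ∈ L) : nrm (-f) = nrm f := by
  have := hA.banach.smul_eq f hf (-1)
  simpa using this

lemma nrm_abs_le {L : Set (Ω →ₘ[μ] ℝ)} {nrm : (Ω →ₘ[μ] ℝ) → ℝ} (hA : IsAdmissible L nrm)
    {f : Ω →ₘ[μ] ℝ} (hf : f ∈ L) : nrm |f| ≤ nrm f :=
  hA.banach.solid _ (mem_abs hA hf) _ hf (by rw [Mabs_abs])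

lemma mem_sum {L : Set (Ω →ₘ[μ] ℝ)} {nrm : (Ω →ₘ[μ] ℝ) → ℝ} (hA : IsAdmissible L nrm)
    {ι : Type*} {s : Finset ι} {v : ι → (Ω →ₘ[μ] ℝ)} (hv : ∀ k ∈ s, v k ∈ L) :
    (∑ k ∈ s, v k) ∈ L := by
  classical
  induction s using Finset.induction_on with
  | empty => simpa using hA.zero_mem
  | insert a s hx ih =>
    rw [Finset.sum_insert hx]
    exact hA.add_mem _ (hv a (Finset.mem_insert_self a s)) _
      (ih fun k hk => hv k (Finset.mem_insert_of_mem hk))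

lemma nrm_sum_le {L : Set (Ω →ₘ[μ] ℝ)} {nrm : (Ω →ₘ[μ] ℝ) → ℝ} (hA : IsAdmissible L nrm)
    {ι : Type*} {s : Finset ι} {v : ι → (Ω →ₘ[μ] ℝ)} (hv : ∀ k ∈ s, v k ∈ L) :
    nrm (∑ k ∈ s, v k) ≤ ∑ k ∈ s, nrm (v k) := by
  classical
  induction s using Finset.induction_on with
  | empty => simp [nrm_zero hA]
  | insert a s hx ih =>
    rw [Finset.sum_insert hx, Finset.sum_insert hx]
    refine le_trans (hA.banach.triangle _ (hv a (Finset.mem_insert_self a s)) _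
      (mem_sum hA fun k hk => hv k (Finset.mem_insert_of_mem hk))) ?_
    exact add_le_add_right (ih fun k hk => hv k (Finset.mem_insert_of_mem hk)) _


/-- If `u n → Y` in norm and `g ≤ u n` eventually, then `g ≤ Y`. -/
lemma le_of_nrm_tendsto {L : Set (Ω →ₘ[μ] ℝ)} {nrm : (Ω →ₘ[μ] ℝ) → ℝ}
    (hA : IsAdmissible L nrm) {u : ℕ → (Ω →ₘ[μ] ℝ)} (hu : ∀ n, u n ∈ L)
    {Y : Ω →ₘ[μ] ℝ} (hY : Y ∈ L)
    (hconv : ∀ ε : ℝ, 0 < ε → ∃ N : ℕ, ∀ n ≥ N, nrm (u n - Y) < ε)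
    {g : Ω →ₘ[μ] ℝ} (hg : g ∈ L) {n0 : ℕ} (hle : ∀ n ≥ n0, g ≤ u n) : g ≤ Y := by
  have key : ∀ ε : ℝ, 0 < ε → nrm (g ⊔ Y - Y) < ε := by
    intro ε hε
    obtain ⟨N, hN⟩ := hconv (ε / 2) (by linarith)
    set n := max N n0 with hn
    have h1 : g ⊔ u n = u n := sup_eq_right.mpr (hle n (le_max_right _ _))
    have h2 : nrm (u n - Y) < ε / 2 := hN n (le_max_left _ _)
    have hmemY : g ⊔ Y ∈ L := hA.sup_mem _ hg _ hY
    have hmemun : g ⊔ u n ∈ L := hA.sup_mem _ hg _ (hu n)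
    have hsplit : g ⊔ Y - Y = (g ⊔ Y - g ⊔ u n) + (u n - Y) := by
      rw [h1]; abel
    have h3 : nrm (g ⊔ Y - g ⊔ u n) ≤ nrm (u n - Y) := by
      have hs : |g ⊔ Y - g ⊔ u n| ≤ |u n - Y| := by
        have := Mabs_sup_sub_sup_le Y (u n) g
        rw [sup_comm Y g, sup_comm (u n) g] at this
        refine le_trans this ?_
        have : Y - u n = -(u n - Y) := by abel
        rw [this, abs_neg]
      exact hA.banach.solid _ (mem_sub hA hmemY hmemun) _ (mem_sub hA (hu n) hY) hs
    calc nrm (g ⊔ Y - Y) ≤ nrm (g ⊔ Y - g ⊔ u n) + nrm (u n - Y) := by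
          rw [hsplit]
          exact hA.banach.triangle _ (mem_sub hA hmemY hmemun) _ (mem_sub hA (hu n) hY)
      _ ≤ nrm (u n - Y) + nrm (u n - Y) := by linarith
      _ < ε := by linarith
  have hnn : 0 ≤ nrm (g ⊔ Y - Y) :=
    hA.banach.nonneg _ (mem_sub hA (hA.sup_mem _ hg _ hY) hY)
  have hz : nrm (g ⊔ Y - Y) = 0 := by
    by_contra hne
    have hpos : 0 < nrm (g ⊔ Y - Y) := lt_of_le_of_ne hnn (Ne.symm hne)
    exact absurd (key _ hpos) (lt_irrefl _)
  have := (hA.banach.eq_zero_iff _ (mem_sub hA (hA.sup_mem _ hg _ hY) hY)).mp hz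
  have : g ⊔ Y = Y := by rwa [sub_eq_zero] at this
  exact sup_eq_right.mp this

/-- A sequence of nonnegative elements with geometrically small norms has an upper bound in `L`. -/
lemma exists_upper_bound {L : Set (Ω →ₘ[μ] ℝ)} {nrm : (Ω →ₘ[μ] ℝ) → ℝ}
    (hA : IsAdmissible L nrm) {v : ℕ → (Ω →ₘ[μ] ℝ)} (hv : ∀ n, v n ∈ L)
    (hvpos : ∀ n, 0 ≤ v n) (hnrm : ∀ n, nrm (v n) ≤ (1/2 : ℝ)^n) :
    ∃ Y ∈ L, ∀ n, v n ≤ Y := by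
  set T : ℕ → (Ω →ₘ[μ] ℝ) := fun N => ∑ k ∈ Finset.range N, v k with hT
  have hTmem : ∀ N, T N ∈ L := fun N => mem_sum hA (fun k _ => hv k)
  have hcauchy : ∀ ε : ℝ, 0 < ε → ∃ N : ℕ, ∀ m ≥ N, ∀ n ≥ N, nrm (T m - T n) < ε := by
    intro ε hε
    obtain ⟨N, hN⟩ := exists_pow_lt_of_lt_one (x := ε / 2) (y := (1/2 : ℝ)) (by linarith) (by norm_num)
    refine ⟨N, ?_⟩
    have key : ∀ m n : ℕ, N ≤ n → n ≤ m → nrm (T m - T n) < ε := by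
      intro m n hNn hnm
      have hdiff : T m - T n = ∑ k ∈ Finset.Ico n m, v k := by
        rw [hT]
        simp only
        rw [← Finset.sum_range_add_sum_Ico _ hnm]
        abel
      rw [hdiff]
      calc nrm (∑ k ∈ Finset.Ico n m, v k) ≤ ∑ k ∈ Finset.Ico n m, nrm (v k) :=
            nrm_sum_le hA (fun k _ => hv k)
        _ ≤ ∑ k ∈ Finset.Ico n m, (1/2 : ℝ)^k := Finset.sum_le_sum (fun k _ => hnrm k)
        _ ≤ (1/2 : ℝ)^n / (1 - 1/2) := geom_sum_Ico_le_of_lt_one (by norm_num) (by norm_num)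
        _ ≤ (1/2 : ℝ)^N / (1 - 1/2) := by
            have : (1/2 : ℝ)^n ≤ (1/2 : ℝ)^N := pow_le_pow_of_le_one (by norm_num) (by norm_num) hNn
            norm_num
            linarith
        _ < ε := by
            have : (1/2 : ℝ)^N < ε / 2 := hN
            norm_num
            linarith
    intro m hm n hn
    rcases le_total n m with h | h
    · exact key m n hn h
    · have := key n m hm h
      have heq : T m - T n = -(T n - T m) := by abel
      rwa [heq, nrm_neg hA (mem_sub hA (hTmem n) (hTmem m))]
  obtain ⟨Y, hYmem, hYconv⟩ := hA.banach.complete T hTmem hcauchy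
  refine ⟨Y, hYmem, fun n => ?_⟩
  refine le_of_nrm_tendsto hA hTmem hYmem hYconv (hv n) (n0 := n + 1) ?_
  intro m hm
  exact Msingle_le_sum hvpos (Finset.mem_range.mpr (by omega))


/-- A monotone real-valued function on an admissible product space is bounded below on a
norm-ball. -/
lemma bdd_below_near {Li : Fin d → Set (Ω →ₘ[μ] ℝ)} {nrmX : Fin d → ((Ω →ₘ[μ] ℝ) → ℝ)}
    (hLi : ∀ i, IsAdmissible (Li i) (nrmX i)) (f : (Fin d → (Ω →ₘ[μ] ℝ)) → ℝ)
    (hmono : ∀ X ∈ prodSet Li, ∀ Y ∈ prodSet Li, X ≤ Y → f X ≤ f Y)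
    {X0 : Fin d → (Ω →ₘ[μ] ℝ)} (hX0 : X0 ∈ prodSet Li) :
    ∃ δ : ℝ, 0 < δ ∧ ∃ C : ℝ, ∀ H : Fin d → (Ω →ₘ[μ] ℝ), (∀ i, H i ∈ Li i) →
      (∀ i, nrmX i (H i) ≤ δ) → f X0 - C ≤ f (X0 + H) := by
  by_contra hcon
  push_neg at hcon
  have hsel : ∀ n : ℕ, ∃ H : Fin d → (Ω →ₘ[μ] ℝ), (∀ i, H i ∈ Li i) ∧
      (∀ i, nrmX i (H i) ≤ (1/2 : ℝ)^n) ∧ f (X0 + H) < f X0 - n := by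
    intro n
    obtain ⟨H, h1, h2, h3⟩ := hcon ((1/2 : ℝ)^n) (by positivity) n
    exact ⟨H, h1, h2, h3⟩
  choose H hHmem hHnrm hHlt using hsel
  -- componentwise upper bounds
  have hcomp : ∀ i : Fin d, ∃ Y ∈ Li i, ∀ n, |H n i| ≤ Y := by
    intro i
    refine exists_upper_bound (hLi i) (v := fun n => |H n i|)
      (fun n => mem_abs (hLi i) (hHmem n i)) (fun n => Mabs_nonneg _) (fun n => ?_)
    exact le_trans (nrm_abs_le (hLi i) (hHmem n i)) (hHnrm n i)
  choose Y hYmem hYle using hcomp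
  have hXY : (X0 - Y) ∈ prodSet Li := fun i => by
    rw [Pi.sub_apply]
    exact mem_sub (hLi i) (hX0 i) (hYmem i)
  have hle : ∀ n, X0 - Y ≤ X0 + H n := by
    intro n i
    rw [Pi.sub_apply, Pi.add_apply, sub_eq_add_neg]
    refine le_trans (Madd_le_add_left ?_ (X0 i)) (Madd_le_add_left (Mneg_abs_le (H n i)) (X0 i))
    exact Mneg_le_neg (hYle i n)
  obtain ⟨n, hn⟩ := exists_nat_gt (f X0 - f (X0 - Y))
  have hXHn : (X0 + H n) ∈ prodSet Li := fun i => by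
    rw [Pi.add_apply]; exact (hLi i).add_mem _ (hX0 i) _ (hHmem n i)
  have := hmono _ hXY _ hXHn (hle n)
  have := hHlt n
  linarith


set_option maxHeartbeats 2000000 in
/-- if every Köthe dual `X'_i` coincides with the norm dual of `X_i`, then for
any monotone concave `S : X → E` and every `W ∈ E'_+` the functional `X ↦ E[S(X)W]` is
`σ(X,X')`-upper semicontinuous. -/
theorem statement0 {μ : Measure Ω} [IsProbabilityMeasure μ] {d : ℕ}
    (Li : Fin d → Set (Ω →ₘ[μ] ℝ)) (nrmX : Fin d → ((Ω →ₘ[μ] ℝ) → ℝ))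
    (EE : Set (Ω →ₘ[μ] ℝ)) (nrmE : (Ω →ₘ[μ] ℝ) → ℝ)
    (hLi : ∀ i, IsAdmissible (Li i) (nrmX i))
    (hE : IsAdmissible EE nrmE)
    -- every norm-continuous linear functional on `X_i` is represented by an element of `X'_i`
    (hdual_repr : ∀ i, ∀ φ : (Ω →ₘ[μ] ℝ) → ℝ,
      (∀ f ∈ Li i, ∀ g ∈ Li i, φ (f + g) = φ f + φ g) →
      (∀ (c : ℝ), ∀ f ∈ Li i, φ (c • f) = c * φ f) →
      (∃ C : ℝ, ∀ f ∈ Li i, |φ f| ≤ C * nrmX i f) →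
      ∃ Z ∈ kdual (Li i), ∀ f ∈ Li i, φ f = ip f Z)
    -- conversely, every element of `X'_i` induces a norm-continuous linear functional on `X_i`
    (hdual_cont : ∀ i, ∀ Z ∈ kdual (Li i), ∃ C : ℝ, ∀ f ∈ Li i, |ip f Z| ≤ C * nrmX i f)
    (S : (Fin d → (Ω →ₘ[μ] ℝ)) → (Ω →ₘ[μ] ℝ))
    (hmap : ∀ X ∈ prodSet Li, S X ∈ EE)
    (hmono : ∀ X ∈ prodSet Li, ∀ Y ∈ prodSet Li, X ≤ Y → S X ≤ S Y)
    (hconc : ∀ X ∈ prodSet Li, ∀ Y ∈ prodSet Li, ∀ t : ℝ, 0 ≤ t → t ≤ 1 →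
      t • S X + (1 - t) • S Y ≤ S (t • X + (1 - t) • Y)) :
    ∀ W ∈ kdual EE, (0 : Ω →ₘ[μ] ℝ) ≤ W →
      @UpperSemicontinuous (↥(prodSet Li)) ℝ (wtop (prodSet Li) (prodSet fun i => kdual (Li i))) _
        (fun X : ↥(prodSet Li) => ∫ ω, S (X : Fin d → (Ω →ₘ[μ] ℝ)) ω * W ω ∂μ) := by
  classical
  intro W hW hW0
  have hWae : ∀ᵐ ω ∂μ, 0 ≤ W ω := by
    have h := Mle_iff.mp hW0
    filter_upwards [h, AEEqFun.coeFn_zero (β := ℝ) (μ := μ)] with ω h1 h2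
    rw [h2] at h1; exact h1
  set F : (Fin d → (Ω →ₘ[μ] ℝ)) → ℝ := fun X => ∫ ω, S X ω * W ω ∂μ with hFdef
  have hint : ∀ X ∈ prodSet Li, Integrable (fun ω => S X ω * W ω) μ :=
    fun X hX => hW _ (hmap X hX)
  have hFmono : ∀ X ∈ prodSet Li, ∀ Y ∈ prodSet Li, X ≤ Y → F X ≤ F Y := by
    intro X hX Y hY hXY
    refine integral_mono_ae (hint X hX) (hint Y hY) ?_
    have h1 := Mle_iff.mp (hmono X hX Y hY hXY)
    filter_upwards [h1, hWae] with ω h1 h2 using mul_le_mul_of_nonneg_right h1 h2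
  have hFconc : ∀ X ∈ prodSet Li, ∀ Y ∈ prodSet Li, ∀ t : ℝ, 0 ≤ t → t ≤ 1 →
      t * F X + (1 - t) * F Y ≤ F (t • X + (1 - t) • Y) := by
    intro X hX Y hY t ht0 ht1
    have hXY : t • X + (1 - t) • Y ∈ prodSet Li := by
      intro i
      rw [Pi.add_apply, Pi.smul_apply, Pi.smul_apply]
      exact (hLi i).add_mem _ ((hLi i).smul_mem t _ (hX i)) _ ((hLi i).smul_mem (1 - t) _ (hY i))
    have hmemE : (t • S X + (1 - t) • S Y) ∈ EE :=
      hE.add_mem _ (hE.smul_mem _ _ (hmap X hX)) _ (hE.smul_mem _ _ (hmap Y hY))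
    have hcomb : Integrable (fun ω => (t • S X + (1 - t) • S Y) ω * W ω) μ := hW _ hmemE
    have h2 : ∫ ω, (t • S X + (1 - t) • S Y) ω * W ω ∂μ ≤ F (t • X + (1 - t) • Y) := by
      refine integral_mono_ae hcomb (hint _ hXY) ?_
      have h1 := Mle_iff.mp (hconc X hX Y hY t ht0 ht1)
      filter_upwards [h1, hWae] with ω h1 h2 using mul_le_mul_of_nonneg_right h1 h2
    have h3 : ∫ ω, (t • S X + (1 - t) • S Y) ω * W ω ∂μ = t * F X + (1 - t) * F Y := by
      have heq : (fun ω => (t • S X + (1 - t) • S Y) ω * W ω)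
          =ᵐ[μ] fun ω => t * (S X ω * W ω) + (1 - t) * (S Y ω * W ω) := by
        filter_upwards [AEEqFun.coeFn_add (t • S X) ((1 - t) • S Y),
          AEEqFun.coeFn_smul t (S X), AEEqFun.coeFn_smul (1 - t) (S Y)] with ω ha hb hc
        rw [ha, Pi.add_apply, hb, hc, Pi.smul_apply, Pi.smul_apply, smul_eq_mul, smul_eq_mul]
        ring
      rw [integral_congr_ae heq, integral_add ((hint X hX).const_mul t)
        ((hint Y hY).const_mul (1 - t)), integral_const_mul, integral_const_mul]
    linarith
  letI : TopologicalSpace ↥(prodSet Li) := wtop (prodSet Li) (prodSet fun i => kdual (Li i))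
  intro X0s
  have hX0 : (X0s : Fin d → (Ω →ₘ[μ] ℝ)) ∈ prodSet Li := X0s.2
  set X0 : Fin d → (Ω →ₘ[μ] ℝ) := (X0s : Fin d → (Ω →ₘ[μ] ℝ)) with hX0def
  obtain ⟨δ, hδ, C0, hC0⟩ := bdd_below_near hLi F hFmono hX0
  have hC0nn : 0 ≤ C0 := by
    have h := hC0 0 (fun i => by rw [Pi.zero_apply]; exact (hLi i).zero_mem)
      (fun i => by rw [Pi.zero_apply, nrm_zero (hLi i)]; exact le_of_lt hδ)
    rw [add_zero] at h
    linarith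
  -- the product space as a submodule
  let V : Submodule ℝ (Fin d → (Ω →ₘ[μ] ℝ)) :=
    { carrier := prodSet Li
      add_mem' := fun {a b} ha hb i => (hLi i).add_mem _ (ha i) _ (hb i)
      zero_mem' := fun i => (hLi i).zero_mem
      smul_mem' := fun c a ha i => by
        rw [Pi.smul_apply]; exact (hLi i).smul_mem c _ (ha i) }
  have hVmem : ∀ x ∈ prodSet Li, x ∈ V := fun x hx => hx
  have hmemt : ∀ (t : ℝ) (Hv : ↥V), X0 + t • (Hv : Fin d → (Ω →ₘ[μ] ℝ)) ∈ prodSet Li := by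
    intro t Hv i
    rw [Pi.add_apply, Pi.smul_apply]
    exact (hLi i).add_mem _ (hX0 i) _ ((hLi i).smul_mem t _ (Hv.2 i))
  set q : ↥V → ℝ → ℝ :=
    fun Hv t => (F (X0 + t • (Hv : Fin d → (Ω →ₘ[μ] ℝ))) - F X0) / t with hqdef
  set Q : ↥V → Set ℝ := fun Hv => {r | ∃ t : ℝ, 0 < t ∧ r = q Hv t} with hQdef
  have hqmono : ∀ Hv : ↥V, ∀ s t : ℝ, 0 < s → s ≤ t → q Hv t ≤ q Hv s := by
    intro Hv s t hs hst
    have ht : 0 < t := lt_of_lt_of_le hs hst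
    have harg : (s / t) • (X0 + t • (Hv : Fin d → (Ω →ₘ[μ] ℝ))) + (1 - s / t) • X0
        = X0 + s • (Hv : Fin d → (Ω →ₘ[μ] ℝ)) := by
      match_scalars <;> field_simp <;> ring
    have hc := hFconc _ (hmemt t Hv) _ hX0 (s / t) (by positivity)
      (div_le_one_of_le₀ hst (le_of_lt ht))
    rw [harg] at hc
    rw [hqdef]
    simp only
    rw [div_le_div_iff₀ ht hs]
    have hexp : (s / t * F (X0 + t • (Hv : Fin d → (Ω →ₘ[μ] ℝ)))
        + (1 - s / t) * F X0) * t
        = s * F (X0 + t • (Hv : Fin d → (Ω →ₘ[μ] ℝ))) + (t - s) * F X0 := by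
      field_simp
    nlinarith [mul_le_mul_of_nonneg_right hc (le_of_lt ht)]
  have hslope : ∀ Hv : ↥V, ∀ t s : ℝ, 0 < t → 0 < s →
      q Hv t ≤ (F X0 - F (X0 + (-s) • (Hv : Fin d → (Ω →ₘ[μ] ℝ)))) / s := by
    intro Hv t s ht hs
    have hst : 0 < s + t := by linarith
    have harg : (s / (s + t)) • (X0 + t • (Hv : Fin d → (Ω →ₘ[μ] ℝ)))
        + (1 - s / (s + t)) • (X0 + (-s) • (Hv : Fin d → (Ω →ₘ[μ] ℝ))) = X0 := by
      match_scalars <;> field_simp <;> ring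
    have hc := hFconc _ (hmemt t Hv) _ (hmemt (-s) Hv) (s / (s + t))
      (by positivity) (by rw [div_le_one hst]; linarith)
    rw [harg] at hc
    rw [hqdef]
    simp only
    rw [div_le_div_iff₀ ht hs]
    have hexp : (s / (s + t) * F (X0 + t • (Hv : Fin d → (Ω →ₘ[μ] ℝ)))
        + (1 - s / (s + t)) * F (X0 + (-s) • (Hv : Fin d → (Ω →ₘ[μ] ℝ)))) * (s + t)
        = s * F (X0 + t • (Hv : Fin d → (Ω →ₘ[μ] ℝ)))
          + t * F (X0 + (-s) • (Hv : Fin d → (Ω →ₘ[μ] ℝ))) := by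
      field_simp
      ring
    nlinarith [mul_le_mul_of_nonneg_right hc (le_of_lt hst)]
  have hQne : ∀ Hv : ↥V, (Q Hv).Nonempty := fun Hv => ⟨q Hv 1, 1, one_pos, rfl⟩
  have hQbdd : ∀ Hv : ↥V, BddAbove (Q Hv) := by
    intro Hv
    refine ⟨(F X0 - F (X0 + (-1 : ℝ) • (Hv : Fin d → (Ω →ₘ[μ] ℝ)))) / 1, ?_⟩
    rintro r ⟨t, ht, rfl⟩
    exact hslope Hv t 1 ht one_pos
  set fd : ↥V → ℝ := fun Hv => sSup (Q Hv) with hfddef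
  have hfd_ge : ∀ (Hv : ↥V) (t : ℝ), 0 < t → q Hv t ≤ fd Hv :=
    fun Hv t ht => le_csSup (hQbdd Hv) ⟨t, ht, rfl⟩
  have hqsmul : ∀ (Hv : ↥V) (c t : ℝ), 0 < c → 0 < t →
      q (c • Hv) t = c * q Hv (t * c) := by
    intro Hv c t hc ht
    rw [hqdef]
    simp only [Submodule.coe_smul, smul_smul]
    field_simp
  have hfd_smul : ∀ (c : ℝ), 0 < c → ∀ Hv : ↥V, fd (c • Hv) = c * fd Hv := by
    intro c hc Hv
    have h1 : fd (c • Hv) ≤ c * fd Hv := by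
      refine csSup_le (hQne _) ?_
      rintro r ⟨t, ht, rfl⟩
      rw [hqsmul Hv c t hc ht]
      exact mul_le_mul_of_nonneg_left (hfd_ge Hv (t * c) (by positivity)) (le_of_lt hc)
    have h2 : fd Hv ≤ fd (c • Hv) / c := by
      refine csSup_le (hQne _) ?_
      rintro r ⟨t, ht, rfl⟩
      have hmem : c * q Hv t ∈ Q (c • Hv) := by
        refine ⟨t / c, by positivity, ?_⟩
        rw [hqsmul Hv c (t / c) hc (by positivity), div_mul_cancel₀ _ (ne_of_gt hc)]
      have := le_csSup (hQbdd (c • Hv)) hmem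
      rw [le_div_iff₀ hc, mul_comm]
      exact this
    rw [le_div_iff₀ hc] at h2
    nlinarith
  have hfd_add : ∀ H1 H2 : ↥V, fd H1 + fd H2 ≤ fd (H1 + H2) := by
    intro H1 H2
    have key2 : ∀ r1 ∈ Q H1, ∀ r2 ∈ Q H2, r1 + r2 ≤ fd (H1 + H2) := by
      rintro r1 ⟨t1, ht1, rfl⟩ r2 ⟨t2, ht2, rfl⟩
      set t : ℝ := min t1 t2 with htdef
      have ht : 0 < t := lt_min ht1 ht2
      have hq1 : q H1 t1 ≤ q H1 t := hqmono H1 t t1 ht (min_le_left _ _)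
      have hq2 : q H2 t2 ≤ q H2 t := hqmono H2 t t2 ht (min_le_right _ _)
      have harg : (1/2 : ℝ) • (X0 + t • (H1 : Fin d → (Ω →ₘ[μ] ℝ)))
          + (1 - 1/2 : ℝ) • (X0 + t • (H2 : Fin d → (Ω →ₘ[μ] ℝ)))
          = X0 + (t/2) • ((H1 + H2 : ↥V) : Fin d → (Ω →ₘ[μ] ℝ)) := by
        push_cast
        match_scalars <;> field_simp <;> norm_num
      have hc := hFconc _ (hmemt t H1) _ (hmemt t H2) (1/2 : ℝ) (by norm_num) (by norm_num)
      rw [harg] at hc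
      have hkey : q H1 t + q H2 t ≤ q (H1 + H2) (t/2) := by
        rw [hqdef]
        simp only
        rw [← add_div, div_le_div_iff₀ ht (half_pos ht)]
        nlinarith [mul_le_mul_of_nonneg_right hc (le_of_lt ht)]
      have := hfd_ge (H1 + H2) (t/2) (half_pos ht)
      linarith
    have h1 : fd H1 ≤ fd (H1 + H2) - fd H2 := by
      refine csSup_le (hQne _) fun r1 hr1 => ?_
      have h2 : fd H2 ≤ fd (H1 + H2) - r1 := by
        refine csSup_le (hQne _) fun r2 hr2 => ?_
        linarith [key2 r1 hr1 r2 hr2]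
      linarith
    linarith
  have hfd0 : fd 0 = 0 := by
    have hq0 : ∀ t : ℝ, q 0 t = 0 := by
      intro t
      rw [hqdef]
      simp
    have h1 : fd 0 ≤ 0 := csSup_le (hQne 0) (by rintro r ⟨t, ht, rfl⟩; rw [hq0])
    have h2 : (0:ℝ) ≤ fd 0 := by
      have := hfd_ge 0 1 one_pos
      rwa [hq0] at this
    linarith
  -- Hahn–Banach
  obtain ⟨g, -, hg⟩ := exists_extension_of_le_sublinear (LinearPMap.mk ⊥ 0)
    (fun Hv : ↥V => -fd Hv)
    (fun c hc x => by show -fd (c • x) = c * -fd x; rw [hfd_smul c hc x]; ring)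
    (fun x y => by show -fd (x + y) ≤ -fd x + -fd y; have := hfd_add x y; linarith)
    (by
      rintro ⟨x, hx⟩
      have hx0 : x = 0 := (Submodule.mem_bot ℝ).mp hx
      subst hx0
      simp [hfd0])
  have hglb : ∀ Hv : ↥V, fd Hv ≤ -(g Hv) := by
    intro Hv
    have := hg Hv
    linarith
  -- key supergradient inequality
  have hkey : ∀ Hv : ↥V, F (X0 + (Hv : Fin d → (Ω →ₘ[μ] ℝ))) - F X0 ≤ -(g Hv) := by
    intro Hv
    have h1 := hfd_ge Hv 1 one_pos
    have h2 : q Hv 1 = F (X0 + (Hv : Fin d → (Ω →ₘ[μ] ℝ))) - F X0 := by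
      rw [hqdef]; simp
    linarith [hglb Hv]
  -- bound on g over the ball
  have hgabs : ∀ Hv : ↥V, (∀ i, nrmX i ((Hv : Fin d → (Ω →ₘ[μ] ℝ)) i) ≤ δ) → |g Hv| ≤ C0 := by
    intro Hv hball
    have hub : ∀ Kv : ↥V, (∀ i, nrmX i ((Kv : Fin d → (Ω →ₘ[μ] ℝ)) i) ≤ δ) → g Kv ≤ C0 := by
      intro Kv hb
      have h1 := hkey Kv
      have h2 := hC0 (Kv : Fin d → (Ω →ₘ[μ] ℝ)) (fun i => Kv.2 i) hb
      linarith
    have hballneg : ∀ i, nrmX i (((-Hv : ↥V) : Fin d → (Ω →ₘ[μ] ℝ)) i) ≤ δ := by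
      intro i
      have hcoe : ((-Hv : ↥V) : Fin d → (Ω →ₘ[μ] ℝ)) i = -((Hv : Fin d → (Ω →ₘ[μ] ℝ)) i) := rfl
      rw [hcoe, nrm_neg (hLi i) (Hv.2 i)]
      exact hball i
    have h1 := hub Hv hball
    have h2 := hub (-Hv) hballneg
    rw [map_neg] at h2
    rw [abs_le]
    constructor <;> linarith
  -- the membership of single coordinates
  have hsing : ∀ (i : Fin d) (a : Ω →ₘ[μ] ℝ), a ∈ Li i → Pi.single i a ∈ V := by
    intro i a ha j
    rcases eq_or_ne j i with rfl | hne
    · rwa [Pi.single_eq_same]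
    · rw [Pi.single_eq_of_ne hne]; exact (hLi j).zero_mem
  -- representation of each component functional
  have hrep : ∀ i : Fin d, ∃ Z ∈ kdual (Li i), ∀ a, ∀ ha : a ∈ Li i,
      -(g ⟨Pi.single i a, hsing i a ha⟩) = ip a Z := by
    intro i
    set φ : (Ω →ₘ[μ] ℝ) → ℝ :=
      fun a => if ha : a ∈ Li i then -(g ⟨Pi.single i a, hsing i a ha⟩) else 0 with hφdef
    have hφval : ∀ a, ∀ ha : a ∈ Li i, φ a = -(g ⟨Pi.single i a, hsing i a ha⟩) :=
      fun a ha => dif_pos ha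
    have hadd : ∀ a ∈ Li i, ∀ b ∈ Li i, φ (a + b) = φ a + φ b := by
      intro a ha b hb
      rw [hφval _ ((hLi i).add_mem _ ha _ hb), hφval _ ha, hφval _ hb]
      have heq : (⟨Pi.single i (a + b), hsing i _ ((hLi i).add_mem _ ha _ hb)⟩ : ↥V)
          = ⟨Pi.single i a, hsing i a ha⟩ + ⟨Pi.single i b, hsing i b hb⟩ := by
        exact Subtype.ext (Pi.single_add (f := fun _ => Ω →ₘ[μ] ℝ) i a b)
      rw [heq, map_add]
      ring
    have hsmul : ∀ (c : ℝ), ∀ a ∈ Li i, φ (c • a) = c * φ a := by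
      intro c a ha
      rw [hφval _ ((hLi i).smul_mem c _ ha), hφval _ ha]
      have heq : (⟨Pi.single i (c • a), hsing i _ ((hLi i).smul_mem c _ ha)⟩ : ↥V)
          = c • (⟨Pi.single i a, hsing i a ha⟩ : ↥V) := by
        exact Subtype.ext (Pi.single_smul (f := fun _ => Ω →ₘ[μ] ℝ) i c a)
      rw [heq, LinearMap.map_smul, smul_eq_mul]
      ring
    have hbd : ∃ C : ℝ, ∀ a ∈ Li i, |φ a| ≤ C * nrmX i a := by
      refine ⟨C0 / δ, fun a ha => ?_⟩
      rcases eq_or_lt_of_le ((hLi i).banach.nonneg a ha) with h0 | hpos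
      · have ha0 : a = 0 := ((hLi i).banach.eq_zero_iff a ha).mp h0.symm
        subst ha0
        have : φ 0 = -(g ⟨Pi.single i 0, hsing i 0 ha⟩) := hφval 0 ha
        have hz : (⟨Pi.single i (0 : Ω →ₘ[μ] ℝ), hsing i 0 ha⟩ : ↥V) = 0 := by
          exact Subtype.ext (Pi.single_zero (M := fun _ => Ω →ₘ[μ] ℝ) i)
        rw [this, hz, map_zero, neg_zero, abs_zero, ← h0, mul_zero]
      · set c : ℝ := δ / nrmX i a with hcdef
        have hcpos : 0 < c := by positivity
        have hball : ∀ j, nrmX j ((Pi.single i (c • a) : Fin d → (Ω →ₘ[μ] ℝ)) j) ≤ δ := by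
          intro j
          rcases eq_or_ne j i with rfl | hne
          · rw [Pi.single_eq_same, (hLi j).banach.smul_eq a ha c, abs_of_pos hcpos,
              hcdef, div_mul_cancel₀ _ (ne_of_gt hpos)]
          · rw [Pi.single_eq_of_ne hne, nrm_zero (hLi j)]
            exact le_of_lt hδ
        have h1 := hgabs ⟨Pi.single i (c • a), hsing i _ ((hLi i).smul_mem c _ ha)⟩ hball
        have heq : (⟨Pi.single i (c • a), hsing i _ ((hLi i).smul_mem c _ ha)⟩ : ↥V)
            = c • (⟨Pi.single i a, hsing i a ha⟩ : ↥V) := by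
          exact Subtype.ext (Pi.single_smul (f := fun _ => Ω →ₘ[μ] ℝ) i c a)
        rw [heq, LinearMap.map_smul, smul_eq_mul, abs_mul, abs_of_pos hcpos] at h1
        rw [hφval _ ha, abs_neg]
        calc |g ⟨Pi.single i a, hsing i a ha⟩| = (c * |g ⟨Pi.single i a, hsing i a ha⟩|) / c := by
              field_simp
          _ ≤ C0 / c := (div_le_div_iff_of_pos_right hcpos).mpr h1
          _ = C0 / δ * nrmX i a := by
              rw [hcdef]
              field_simp
    obtain ⟨Z, hZk, hZr⟩ := hdual_repr i φ hadd hsmul hbd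
    exact ⟨Z, hZk, fun a ha => by rw [← hφval a ha]; exact hZr a ha⟩
  choose Z hZmem hZrep using hrep
  have hZD : Z ∈ prodSet (fun i => kdual (Li i)) := fun i => hZmem i
  -- decomposition of g as a pairing
  have hdecomp : ∀ Hv : ↥V, -(g Hv) = pairing (Hv : Fin d → (Ω →ₘ[μ] ℝ)) Z := by
    intro Hv
    have hHsum : Hv = ∑ i, (⟨Pi.single i ((Hv : Fin d → (Ω →ₘ[μ] ℝ)) i),
        hsing i _ (Hv.2 i)⟩ : ↥V) := by
      apply Subtype.ext
      rw [AddSubmonoidClass.coe_finset_sum]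
      exact (Finset.univ_sum_single (Hv : Fin d → (Ω →ₘ[μ] ℝ))).symm
    have hgsum : g Hv = ∑ i, g ⟨Pi.single i ((Hv : Fin d → (Ω →ₘ[μ] ℝ)) i), hsing i _ (Hv.2 i)⟩ := by
      conv_lhs => rw [hHsum]
      exact map_sum g _ _
    rw [hgsum, pairing, ← Finset.sum_neg_distrib]
    exact Finset.sum_congr rfl fun i _ => hZrep i _ (Hv.2 i)
  -- pairing is linear in the first variable on the product space
  have hpairsub : ∀ X ∈ prodSet Li, pairing (X - X0) Z = pairing X Z - pairing X0 Z := by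
    intro X hX
    rw [pairing, pairing, pairing, ← Finset.sum_sub_distrib]
    refine Finset.sum_congr rfl fun i _ => ?_
    rw [Pi.sub_apply]
    have hintX : Integrable (fun ω => X i ω * Z i ω) μ := hZmem i _ (hX i)
    have hintX0 : Integrable (fun ω => X0 i ω * Z i ω) μ := hZmem i _ (hX0 i)
    rw [ip, ip, ip, ← integral_sub hintX hintX0]
    refine integral_congr_ae ?_
    filter_upwards [AEEqFun.coeFn_sub (X i) (X0 i)] with ω h1
    rw [h1, Pi.sub_apply]
    ring
  -- the linear upper bound
  have hbound : ∀ Xs : ↥(prodSet Li), F (Xs : Fin d → (Ω →ₘ[μ] ℝ))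
      ≤ F X0 + (pairing (Xs : Fin d → (Ω →ₘ[μ] ℝ)) Z - pairing X0 Z) := by
    intro Xs
    have hsubmem : ((Xs : Fin d → (Ω →ₘ[μ] ℝ)) - X0) ∈ V := by
      intro i
      rw [Pi.sub_apply]
      exact mem_sub (hLi i) (Xs.2 i) (hX0 i)
    have h1 := hkey ⟨(Xs : Fin d → (Ω →ₘ[μ] ℝ)) - X0, hsubmem⟩
    have h2 := hdecomp ⟨(Xs : Fin d → (Ω →ₘ[μ] ℝ)) - X0, hsubmem⟩
    rw [hpairsub _ Xs.2] at h2
    have h3 : X0 + ((Xs : Fin d → (Ω →ₘ[μ] ℝ)) - X0) = (Xs : Fin d → (Ω →ₘ[μ] ℝ)) := by abel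
    rw [h3] at h1
    linarith
  -- continuity of the pairing functional in the weak topology
  have hcont : Continuous fun Xs : ↥(prodSet Li) =>
      pairing (Xs : Fin d → (Ω →ₘ[μ] ℝ)) Z := by
    have h1 : Continuous fun Xs : ↥(prodSet Li) =>
        fun Zs : ↥(prodSet fun i => kdual (Li i)) =>
          pairing (Xs : Fin d → (Ω →ₘ[μ] ℝ)) (Zs : Fin d → (Ω →ₘ[μ] ℝ)) :=
      continuous_induced_dom
    exact (continuous_apply (⟨Z, hZD⟩ : ↥(prodSet fun i => kdual (Li i)))).comp h1
  -- conclude upper semicontinuity at X0s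
  intro y hy
  have hyF : F X0 < y := hy
  have hUopen : IsOpen {Xs : ↥(prodSet Li) |
      pairing (Xs : Fin d → (Ω →ₘ[μ] ℝ)) Z < pairing X0 Z + (y - F X0)} :=
    isOpen_lt hcont continuous_const
  have hX0U : X0s ∈ {Xs : ↥(prodSet Li) |
      pairing (Xs : Fin d → (Ω →ₘ[μ] ℝ)) Z < pairing X0 Z + (y - F X0)} := by
    show pairing X0 Z < pairing X0 Z + (y - F X0)
    linarith
  refine Filter.eventually_of_mem (hUopen.mem_nhds hX0U) ?_
  intro Xs hXs
  have h1 := hbound Xs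
  have h2 : pairing (Xs : Fin d → (Ω →ₘ[μ] ℝ)) Z < pairing X0 Z + (y - F X0) := hXs
  show F (Xs : Fin d → (Ω →ₘ[μ] ℝ)) < y
  linarith

end SystemicRisk
end
end

section
/- Let X = X_1×…×X_d be an admissible space of d-dimensional random vectors and E an admissible space of random variables. Suppose S : X → E is monotone, concave, surplus invariant (S(X) = S(min(X,0)) for every X ∈ X, where the minimum is taken componentwise), and has the Fatou property (for every sequence (X^n) ⊂ X and X ∈ X with X^n → X almost surely and sup_n |X^n| ∈ X, one has S(X) ≥ limsup_{n→∞} S(X^n)). Then for every W ∈ E'_+ the functional X ↦ E[S(X)W] is upper semicontinuous with respect to σ(X,X'). -/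
open MeasureTheory Filter Set
open scoped ENNReal

noncomputable section

namespace SystemicRisk

variable {Ω : Type*} [MeasurableSpace Ω]

variable {d : ℕ}

/-- `sup_n |g n|` belongs to the space `L`. -/
def supAbsMem {μ : Measure Ω} (L : Set (Ω →ₘ[μ] ℝ)) (g : ℕ → (Ω →ₘ[μ] ℝ)) : Prop :=
  ∃ M ∈ L, ∀ᵐ ω ∂μ, BddAbove (Set.range fun n => |g n ω|) ∧ M ω = ⨆ n, |g n ω|

lemma memL1_of_memL2 {μ : Measure Ω} [IsProbabilityMeasure μ] (h : Lp ℝ 2 μ) :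
    MemLp (⇑h) 1 μ :=
  (Lp.memLp h).mono_exponent (by norm_num)

def inclL2L1 (μ : Measure Ω) [IsProbabilityMeasure μ] : Lp ℝ 2 μ →L[ℝ] Lp ℝ 1 μ :=
  LinearMap.mkContinuous
    { toFun := fun h => (memL1_of_memL2 h).toLp ⇑h
      map_add' := fun h g => by
        beta_reduce
        rw [MemLp.toLp_congr (memL1_of_memL2 (h + g))
          ((memL1_of_memL2 h).add (memL1_of_memL2 g)) (Lp.coeFn_add h g),
          MemLp.toLp_add]
      map_smul' := fun c h => by
        simp only [RingHom.id_apply]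
        apply Lp.ext
        filter_upwards [MemLp.coeFn_toLp (memL1_of_memL2 (c • h)), Lp.coeFn_smul c h,
          Lp.coeFn_smul c ((memL1_of_memL2 h).toLp ⇑h),
          MemLp.coeFn_toLp (memL1_of_memL2 h)] with ω h1 h2 h3 h4
        rw [h1, h2, h3, Pi.smul_apply, Pi.smul_apply, h4] }
    1 (fun h => by
      simp only [LinearMap.coe_mk, AddHom.coe_mk, one_mul]
      rw [Lp.norm_toLp ⇑h (memL1_of_memL2 h), Lp.norm_def]
      exact ENNReal.toReal_mono (Lp.eLpNorm_ne_top h)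
        (eLpNorm_le_eLpNorm_of_exponent_le (by norm_num) (Lp.aestronglyMeasurable h)))

lemma coeFn_inclL2L1 {μ : Measure Ω} [IsProbabilityMeasure μ] (h : Lp ℝ 2 μ) :
    ⇑(inclL2L1 μ h) =ᵐ[μ] ⇑h :=
  MemLp.coeFn_toLp (memL1_of_memL2 h)

lemma norm_inclL2L1 {μ : Measure Ω} [IsProbabilityMeasure μ] (h : Lp ℝ 2 μ) :
    ‖inclL2L1 μ h‖ = (eLpNorm (⇑h) 1 μ).toReal :=
  Lp.norm_toLp ⇑h (memL1_of_memL2 h)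

/-- Representation of continuous linear functionals on `L¹` of a probability space by
essentially bounded random variables. -/
lemma l1_dual_rep {μ : Measure Ω} [IsProbabilityMeasure μ] (F : Lp ℝ 1 μ →L[ℝ] ℝ) :
    ∃ g : Ω →ₘ[μ] ℝ, (∀ᵐ ω ∂μ, |g ω| ≤ ‖F‖) ∧
      ∀ h : Lp ℝ 1 μ, F h = ∫ ω, h ω * g ω ∂μ := by
  classical
  set ℓ : Lp ℝ 2 μ →L[ℝ] ℝ := F.comp (inclL2L1 μ) with hℓ
  set y : Lp ℝ 2 μ := (InnerProductSpace.toDual ℝ (Lp ℝ 2 μ)).symm ℓ with hy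
  have hyint : Integrable (⇑y) μ := MemLp.integrable (by norm_num) (Lp.memLp y)
  have hinner : ∀ h : Lp ℝ 2 μ, ℓ h = ∫ ω, y ω * h ω ∂μ := by
    intro h
    have h1 : @inner ℝ _ _ y h = ℓ h := InnerProductSpace.toDual_symm_apply
    rw [← h1, L2.inner_def]
    simp [RCLike.inner_apply, mul_comm]
  have hset : ∀ s : Set Ω, (hs : MeasurableSet s) → (hμs : μ s < ∞) →
      ∫ ω in s, y ω ∂μ = F (inclL2L1 μ (indicatorConstLp 2 hs hμs.ne (1 : ℝ))) := by
    intro s hs hμs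
    rw [← L2.inner_indicatorConstLp_one (𝕜 := ℝ) hs hμs.ne y, real_inner_comm,
      InnerProductSpace.toDual_symm_apply]
    rfl
  have hnorm_ind : ∀ s : Set Ω, (hs : MeasurableSet s) → (hμs : μ s < ∞) →
      ‖inclL2L1 μ (indicatorConstLp 2 hs hμs.ne (1 : ℝ))‖ = (μ s).toReal := by
    intro s hs hμs
    rw [norm_inclL2L1, eLpNorm_congr_ae indicatorConstLp_coeFn,
      eLpNorm_indicator_const hs one_ne_zero ENNReal.one_ne_top]
    simp
  have hbound : ∀ s : Set Ω, MeasurableSet s → μ s < ∞ →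
      |∫ ω in s, y ω ∂μ| ≤ ‖F‖ * (μ s).toReal := by
    intro s hs hμs
    rw [hset s hs hμs]
    calc |F (inclL2L1 μ (indicatorConstLp 2 hs hμs.ne (1 : ℝ)))|
        ≤ ‖F‖ * ‖inclL2L1 μ (indicatorConstLp 2 hs hμs.ne (1 : ℝ))‖ := F.le_opNorm _
      _ = ‖F‖ * (μ s).toReal := by rw [hnorm_ind s hs hμs]
  have hub : (0 : Ω → ℝ) ≤ᵐ[μ] fun ω => ‖F‖ - y ω := by
    apply ae_nonneg_of_forall_setIntegral_nonneg ((integrable_const ‖F‖).sub hyint)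
    intro s hs hμs
    simp only [Pi.sub_apply]
    rw [integral_sub (integrableOn_const (C := ‖F‖) hμs.ne) hyint.integrableOn, setIntegral_const]
    have := (abs_le.1 (hbound s hs hμs)).2
    simp only [smul_eq_mul, Measure.real]
    linarith
  have hlb : (0 : Ω → ℝ) ≤ᵐ[μ] fun ω => y ω + ‖F‖ := by
    apply ae_nonneg_of_forall_setIntegral_nonneg (hyint.add (integrable_const ‖F‖))
    intro s hs hμs
    simp only [Pi.add_apply]
    rw [integral_add hyint.integrableOn (integrableOn_const (C := ‖F‖) hμs.ne), setIntegral_const]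
    have := (abs_le.1 (hbound s hs hμs)).1
    simp only [smul_eq_mul, Measure.real]
    linarith
  have hybdd : ∀ᵐ ω ∂μ, |y ω| ≤ ‖F‖ := by
    filter_upwards [hub, hlb] with ω h1 h2
    simp only [Pi.zero_apply] at h1 h2
    rw [abs_le]; constructor <;> linarith
  refine ⟨(y : Ω →ₘ[μ] ℝ), hybdd, ?_⟩
  have hint : ∀ h : Lp ℝ 1 μ, Integrable (fun ω => h ω * y ω) μ := by
    intro h
    have h1 : Integrable (fun ω => y ω * h ω) μ :=
      Integrable.bdd_mul (c := ‖F‖) (L1.integrable_coeFn h) (Lp.aestronglyMeasurable y)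
        (hybdd.mono fun ω hω => by simpa using hω)
    exact h1.congr (Eventually.of_forall fun ω => mul_comm _ _)
  set G : Lp ℝ 1 μ →L[ℝ] ℝ := LinearMap.mkContinuous
    { toFun := fun h => ∫ ω, h ω * y ω ∂μ
      map_add' := fun h g => by
        rw [← integral_add (hint h) (hint g)]
        apply integral_congr_ae
        filter_upwards [Lp.coeFn_add h g] with ω hω
        rw [hω, Pi.add_apply]
        ring
      map_smul' := fun c h => by
        simp only [RingHom.id_apply, smul_eq_mul]
        rw [← integral_const_mul]
        apply integral_congr_ae
        filter_upwards [Lp.coeFn_smul c h] with ω hω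
        rw [hω, Pi.smul_apply, smul_eq_mul]
        ring }
    ‖F‖ (fun h => by
      simp only [LinearMap.coe_mk, AddHom.coe_mk]
      calc ‖∫ ω, h ω * y ω ∂μ‖ ≤ ∫ ω, ‖h ω * y ω‖ ∂μ := norm_integral_le_integral_norm _
        _ ≤ ∫ ω, ‖F‖ * ‖h ω‖ ∂μ := by
            apply integral_mono_ae (hint h).norm
              (((L1.integrable_coeFn h).norm).const_mul _)
            filter_upwards [hybdd] with ω hω
            rw [norm_mul]
            calc ‖h ω‖ * ‖y ω‖ ≤ ‖h ω‖ * ‖F‖ := by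
                  apply mul_le_mul_of_nonneg_left _ (norm_nonneg _)
                  simpa [Real.norm_eq_abs] using hω
              _ = ‖F‖ * ‖h ω‖ := mul_comm _ _
        _ = ‖F‖ * ∫ ω, ‖h ω‖ ∂μ := integral_const_mul _ _
        _ = ‖F‖ * ‖h‖ := by rw [← L1.norm_eq_integral_norm]) with hG
  have hGincl : ∀ h : Lp ℝ 2 μ, G (inclL2L1 μ h) = F (inclL2L1 μ h) := by
    intro h
    have h0 : G (inclL2L1 μ h) = ∫ ω, (inclL2L1 μ h) ω * y ω ∂μ := rfl
    have h2 : F (inclL2L1 μ h) = ℓ h := rfl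
    rw [h0, h2, hinner h]
    apply integral_congr_ae
    filter_upwards [coeFn_inclL2L1 h] with ω hω
    rw [hω, mul_comm]
  have hdense : Dense (Set.range (⇑(inclL2L1 μ) : Lp ℝ 2 μ → Lp ℝ 1 μ)) := by
    apply Dense.mono _ (Lp.simpleFunc.denseRange (E := ℝ) (μ := μ) ENNReal.one_ne_top)
    rintro _ ⟨q, rfl⟩
    obtain ⟨C, hC⟩ := (Lp.simpleFunc.toSimpleFunc q).exists_forall_norm_le
    have hmem : MemLp (⇑(Lp.simpleFunc.toSimpleFunc q)) 2 μ :=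
      MemLp.of_bound (Lp.simpleFunc.toSimpleFunc q).aestronglyMeasurable C
        (Eventually.of_forall hC)
    refine ⟨hmem.toLp _, ?_⟩
    apply Lp.ext
    filter_upwards [coeFn_inclL2L1 (hmem.toLp _), MemLp.coeFn_toLp hmem,
      Lp.simpleFunc.toSimpleFunc_eq_toFun q] with ω h1 h2 h3
    rw [h1, h2, h3]
  have hFG : (⇑F : Lp ℝ 1 μ → ℝ) = ⇑G := by
    apply Continuous.ext_on hdense F.continuous G.continuous
    rintro _ ⟨h2, rfl⟩
    exact (hGincl h2).symm
  intro h
  calc F h = G h := by rw [hFG]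
    _ = ∫ ω, h ω * y ω ∂μ := rfl


/-- a monotone, concave, surplus-invariant impact map with the Fatou property
induces `σ(X,X')`-upper semicontinuous functionals `X ↦ E[S(X)W]` for all `W ∈ E'_+`. -/
theorem statement1 {μ : Measure Ω} [IsProbabilityMeasure μ] {d : ℕ}
    (Li : Fin d → Set (Ω →ₘ[μ] ℝ)) (nrmX : Fin d → ((Ω →ₘ[μ] ℝ) → ℝ))
    (EE : Set (Ω →ₘ[μ] ℝ)) (nrmE : (Ω →ₘ[μ] ℝ) → ℝ)
    (hLi : ∀ i, IsAdmissible (Li i) (nrmX i))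
    (hE : IsAdmissible EE nrmE)
    (S : (Fin d → (Ω →ₘ[μ] ℝ)) → (Ω →ₘ[μ] ℝ))
    (hmap : ∀ X ∈ prodSet Li, S X ∈ EE)
    (hmono : ∀ X ∈ prodSet Li, ∀ Y ∈ prodSet Li, X ≤ Y → S X ≤ S Y)
    (hconc : ∀ X ∈ prodSet Li, ∀ Y ∈ prodSet Li, ∀ t : ℝ, 0 ≤ t → t ≤ 1 →
      t • S X + (1 - t) • S Y ≤ S (t • X + (1 - t) • Y))
    -- surplus invariance : `S(X) = S(min(X,0))` (componentwise minimum)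
    (hsurplus : ∀ X ∈ prodSet Li, S X = S (X ⊓ 0))
    -- Fatou property
    (hfatou : ∀ (u : ℕ → (Fin d → (Ω →ₘ[μ] ℝ))) (X : Fin d → (Ω →ₘ[μ] ℝ)),
      (∀ n, u n ∈ prodSet Li) → X ∈ prodSet Li →
      (∀ i, ∀ᵐ ω ∂μ, Tendsto (fun n => u n i ω) atTop (nhds (X i ω))) →
      (∀ i, supAbsMem (Li i) (fun n => u n i)) →
      ∀ᵐ ω ∂μ, limsup (fun n => S (u n) ω) atTop ≤ S X ω) :
    ∀ W ∈ kdual EE, (0 : Ω →ₘ[μ] ℝ) ≤ W →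
      @UpperSemicontinuous (↥(prodSet Li)) ℝ (wtop (prodSet Li) (prodSet fun i => kdual (Li i))) _
        (fun X : ↥(prodSet Li) => ∫ ω, S (X : Fin d → (Ω →ₘ[μ] ℝ)) ω * W ω ∂μ) := by
  classical
  intro W hW hW0
  set XX := prodSet Li with hXXdef
  letI tXX : TopologicalSpace ↥XX := wtop XX (prodSet fun i => kdual (Li i))
  set φ : (Fin d → (Ω →ₘ[μ] ℝ)) → ℝ := fun X => ∫ ω, S X ω * W ω ∂μ with hφdef
  -- basic a.e. facts
  have hWnn : ∀ᵐ ω ∂μ, 0 ≤ W ω := by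
    filter_upwards [AEEqFun.coeFn_le.2 hW0, AEEqFun.coeFn_zero (β := ℝ) (μ := μ)] with ω h1 h2
    rw [h2] at h1; exact h1
  have hSint : ∀ X ∈ XX, Integrable (fun ω => S X ω * W ω) μ := fun X hX => hW _ (hmap X hX)
  have hφle : ∀ X ∈ XX, ∀ Y ∈ XX, X ≤ Y → φ X ≤ φ Y := by
    intro X hX Y hY hXY
    apply integral_mono_ae (hSint X hX) (hSint Y hY)
    filter_upwards [AEEqFun.coeFn_le.2 (hmono X hX Y hY hXY), hWnn] with ω h1 h2
    exact mul_le_mul_of_nonneg_right h1 h2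
  have h0XX : (0 : Fin d → (Ω →ₘ[μ] ℝ)) ∈ XX := fun i => (hLi i).zero_mem
  have hmeminf : ∀ X ∈ XX, X ⊓ 0 ∈ XX := fun X hX i =>
    (hLi i).inf_mem _ (hX i) _ (hLi i).zero_mem
  have hmemcomb : ∀ X ∈ XX, ∀ Y ∈ XX, ∀ a b : ℝ, a • X + b • Y ∈ XX := fun X hX Y hY a b i =>
    (hLi i).add_mem _ ((hLi i).smul_mem a _ (hX i)) _ ((hLi i).smul_mem b _ (hY i))
  have hconvφ : ∀ X ∈ XX, ∀ Y ∈ XX, ∀ t : ℝ, 0 ≤ t → t ≤ 1 →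
      t * φ X + (1 - t) * φ Y ≤ φ (t • X + (1 - t) • Y) := by
    intro X hX Y hY t ht0 ht1
    have hmemc : t • X + (1 - t) • Y ∈ XX := hmemcomb X hX Y hY t (1 - t)
    have hIX := hSint X hX
    have hIY := hSint Y hY
    have hIC := hSint _ hmemc
    have hstep : ∫ ω, (t * (S X ω * W ω) + (1 - t) * (S Y ω * W ω)) ∂μ
        ≤ φ (t • X + (1 - t) • Y) := by
      apply integral_mono_ae ((hIX.const_mul t).add (hIY.const_mul (1 - t))) hIC
      filter_upwards [AEEqFun.coeFn_le.2 (hconc X hX Y hY t ht0 ht1), hWnn,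
        AEEqFun.coeFn_add (t • S X) ((1 - t) • S Y), AEEqFun.coeFn_smul t (S X),
        AEEqFun.coeFn_smul (1 - t) (S Y)] with ω h1 h2 h3 h4 h5
      have hkey : t * S X ω + (1 - t) * S Y ω ≤ S (t • X + (1 - t) • Y) ω := by
        rw [h3, Pi.add_apply, h4, h5, Pi.smul_apply, Pi.smul_apply, smul_eq_mul,
          smul_eq_mul] at h1
        exact h1
      calc t * (S X ω * W ω) + (1 - t) * (S Y ω * W ω)
          = (t * S X ω + (1 - t) * S Y ω) * W ω := by ring
        _ ≤ S (t • X + (1 - t) • Y) ω * W ω := mul_le_mul_of_nonneg_right hkey h2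
    calc t * φ X + (1 - t) * φ Y
        = ∫ ω, (t * (S X ω * W ω) + (1 - t) * (S Y ω * W ω)) ∂μ := by
          rw [integral_add (hIX.const_mul t) (hIY.const_mul (1 - t)), integral_const_mul,
            integral_const_mul]
      _ ≤ φ (t • X + (1 - t) • Y) := hstep
  -- the key closedness property
  have key : ∀ c : ℝ, ∀ X₀s : ↥XX, X₀s ∈ closure {Ys : ↥XX | c ≤ φ ↑Ys} → c ≤ φ ↑X₀s := by
    intro c X₀s hcl
    obtain ⟨X₀, hX₀⟩ := X₀s
    simp only [Set.mem_setOf_eq]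
    have hXint : ∀ X, X ∈ XX → ∀ i, Integrable (⇑(X i)) μ := fun X hX i =>
      (hLi i).subset_lone _ (hX i)
    -- the canonical embedding into (L¹)^d
    set toE : ∀ (X : Fin d → (Ω →ₘ[μ] ℝ)), X ∈ XX → (Fin d → Lp ℝ 1 μ) :=
      fun X hX i => (hXint X hX i).toL1 ⇑(X i) with htoEdef
    have htoE : ∀ (X) (hX : X ∈ XX) (i), ((toE X hX i : Lp ℝ 1 μ) : Ω →ₘ[μ] ℝ) = X i := by
      intro X hX i
      exact AEEqFun.ext (Integrable.coeFn_toL1 _)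
    set e₀ : Fin d → Lp ℝ 1 μ := toE X₀ hX₀ with he₀
    set T : Set (Fin d → Lp ℝ 1 μ) :=
      {v | ∃ X, (X ∈ XX ∧ c ≤ φ X) ∧ ∀ i, ((v i : Ω →ₘ[μ] ℝ)) = X i} with hTdef
    have hTconv : Convex ℝ T := by
      rintro v ⟨X, ⟨hX, hcX⟩, hvX⟩ w ⟨Y, ⟨hY, hcY⟩, hwY⟩ a b ha hb hab
      have hb' : b = 1 - a := by linarith
      subst hb'
      refine ⟨a • X + (1 - a) • Y, ⟨hmemcomb X hX Y hY a (1 - a), ?_⟩, ?_⟩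
      · have h1 := hconvφ X hX Y hY a ha (by linarith)
        nlinarith
      · intro i
        rw [show (((a • v + (1 - a) • w) i : Lp ℝ 1 μ) : Ω →ₘ[μ] ℝ)
            = a • ((v i : Lp ℝ 1 μ) : Ω →ₘ[μ] ℝ) + (1 - a) • ((w i : Lp ℝ 1 μ) : Ω →ₘ[μ] ℝ)
            from rfl, hvX i, hwY i]
        rfl
    -- Step 1 : e₀ lies in the norm closure of T
    have hclT : e₀ ∈ closure T := by
      by_contra hne
      obtain ⟨f, u, hfu1, hfu2⟩ :=
        geometric_hahn_banach_point_closed hTconv.closure isClosed_closure hne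
      set sing : ∀ i : Fin d, Lp ℝ 1 μ →L[ℝ] (Fin d → Lp ℝ 1 μ) := fun i =>
        LinearMap.mkContinuous (LinearMap.single ℝ (fun _ : Fin d => Lp ℝ 1 μ) i) 1
          (fun x => by
            rw [one_mul, show (LinearMap.single ℝ (fun _ : Fin d => Lp ℝ 1 μ) i) x
              = Pi.single i x from rfl, Pi.norm_single]) with hsing
      choose g hgbdd hgrep using fun i : Fin d => l1_dual_rep (f.comp (sing i))
      have hZmem : g ∈ prodSet (fun i => kdual (Li i)) := by
        intro i h hh
        have hint : Integrable (⇑h) μ := (hLi i).subset_lone _ hh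
        have h1 : Integrable (fun ω => g i ω * h ω) μ :=
          Integrable.bdd_mul hint ((g i).aestronglyMeasurable)
            ((hgbdd i).mono fun ω hω => by simpa using hω)
        exact h1.congr (Eventually.of_forall fun ω => mul_comm _ _)
      have hfv : ∀ (v : Fin d → Lp ℝ 1 μ) (X : Fin d → (Ω →ₘ[μ] ℝ)),
          (∀ i, ((v i : Lp ℝ 1 μ) : Ω →ₘ[μ] ℝ) = X i) → f v = pairing X g := by
        intro v X hvX
        have h1 : f v = ∑ i, (f.comp (sing i)) (v i) := by
          conv_lhs => rw [← Finset.univ_sum_single v, map_sum]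
          rfl
        rw [h1, pairing]
        apply Finset.sum_congr rfl
        intro i _
        rw [hgrep i (v i), ip]
        apply integral_congr_ae
        have hco : ⇑(v i) =ᵐ[μ] ⇑(X i) := by
          rw [← hvX i]
        filter_upwards [hco] with ω hω
        rw [hω]
      set U : Set ↥XX := {Ys | pairing (↑Ys) g < u} with hU
      have hUopen : IsOpen U := by
        have hcont : Continuous (fun Xs : ↥XX => fun Zs : ↥(prodSet fun i => kdual (Li i)) =>
            pairing (Xs : Fin d → (Ω →ₘ[μ] ℝ)) (Zs : Fin d → (Ω →ₘ[μ] ℝ))) := by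
          rw [show tXX = TopologicalSpace.induced
            (fun Xs : ↥XX => fun Zs : ↥(prodSet fun i => kdual (Li i)) =>
              pairing (Xs : Fin d → (Ω →ₘ[μ] ℝ)) (Zs : Fin d → (Ω →ₘ[μ] ℝ)))
            Pi.topologicalSpace from rfl]
          exact continuous_induced_dom
        have : U = (fun Xs : ↥XX => fun Zs : ↥(prodSet fun i => kdual (Li i)) =>
            pairing (Xs : Fin d → (Ω →ₘ[μ] ℝ)) (Zs : Fin d → (Ω →ₘ[μ] ℝ))) ⁻¹'
            {p | p ⟨g, hZmem⟩ < u} := rfl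
        rw [this]
        exact (isOpen_lt (continuous_apply _) continuous_const).preimage hcont
      have hX₀U : (⟨X₀, hX₀⟩ : ↥XX) ∈ U := by
        show pairing X₀ g < u
        rw [← hfv e₀ X₀ (htoE X₀ hX₀)]
        exact hfu1
      obtain ⟨Ys, hYsU, hYsD⟩ := mem_closure_iff.1 hcl U hUopen hX₀U
      have hYT : toE (↑Ys) Ys.2 ∈ T := ⟨↑Ys, ⟨Ys.2, hYsD⟩, htoE (↑Ys) Ys.2⟩
      have h2 := hfu2 _ (subset_closure hYT)
      rw [hfv (toE (↑Ys) Ys.2) (↑Ys) (htoE (↑Ys) Ys.2)] at h2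
      exact absurd hYsU (not_lt.2 h2.le)
    -- Step 2 : extract an L¹-approximating sequence
    have happrox : ∀ n : ℕ, ∃ X, (X ∈ XX ∧ c ≤ φ X) ∧
        ∀ i, (∫⁻ ω, ‖X i ω - X₀ i ω‖₊ ∂μ) ≤ ENNReal.ofReal ((1/2 : ℝ)^n) := by
      intro n
      obtain ⟨v, hvT, hvd⟩ := Metric.mem_closure_iff.1 hclT ((1/2 : ℝ)^n) (by positivity)
      obtain ⟨X, hX, hvX⟩ := hvT
      refine ⟨X, hX, fun i => ?_⟩
      have hv' : ⇑(v i) = ⇑(X i) := by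
        show ⇑((v i : Lp ℝ 1 μ) : Ω →ₘ[μ] ℝ) = ⇑(X i)
        rw [hvX i]
      have he' : ⇑(e₀ i) = ⇑(X₀ i) := by
        show ⇑((e₀ i : Lp ℝ 1 μ) : Ω →ₘ[μ] ℝ) = ⇑(X₀ i)
        rw [htoE X₀ hX₀ i]
      have h1 : (⇑(v i - e₀ i) : Ω → ℝ) =ᵐ[μ] fun ω => X i ω - X₀ i ω := by
        filter_upwards [Lp.coeFn_sub (v i) (e₀ i)] with ω hω
        rw [hω, Pi.sub_apply, hv', he']
      have h2 : ∫⁻ ω, ‖X i ω - X₀ i ω‖₊ ∂μ = eLpNorm (⇑(v i - e₀ i)) 1 μ := by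
        rw [eLpNorm_congr_ae h1, eLpNorm_one_eq_lintegral_enorm]
        simp only [enorm_eq_nnnorm]
      rw [h2]
      apply (ENNReal.le_ofReal_iff_toReal_le (Lp.eLpNorm_ne_top _) (by positivity)).2
      calc (eLpNorm (⇑(v i - e₀ i)) 1 μ).toReal = ‖v i - e₀ i‖ := (Lp.norm_def _).symm
        _ ≤ dist v e₀ := by
            rw [dist_eq_norm]
            exact norm_le_pi_norm (v - e₀) i
        _ ≤ (1/2 : ℝ)^n := by rw [dist_comm]; exact hvd.le
    choose Xn hXn hXnd using happrox
    -- Step 3 : a.e. convergence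
    have haeconv : ∀ i, ∀ᵐ ω ∂μ, Tendsto (fun n => Xn n i ω) atTop (nhds (X₀ i ω)) := by
      intro i
      have hmeas : ∀ n : ℕ, AEMeasurable (fun ω => (‖Xn n i ω - X₀ i ω‖₊ : ℝ≥0∞)) μ :=
        fun n => (((Xn n i).stronglyMeasurable.measurable.sub
          (X₀ i).stronglyMeasurable.measurable).nnnorm.coe_nnreal_ennreal).aemeasurable
      have hsum : ∫⁻ ω, ∑' n : ℕ, (‖Xn n i ω - X₀ i ω‖₊ : ℝ≥0∞) ∂μ ≠ ⊤ := by
        rw [lintegral_tsum hmeas]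
        have hle : ∑' n : ℕ, (∫⁻ ω, (‖Xn n i ω - X₀ i ω‖₊ : ℝ≥0∞) ∂μ)
            ≤ ∑' n : ℕ, (ENNReal.ofReal (1/2 : ℝ))^n := by
          apply ENNReal.tsum_le_tsum
          intro n
          calc (∫⁻ ω, (‖Xn n i ω - X₀ i ω‖₊ : ℝ≥0∞) ∂μ) ≤ ENNReal.ofReal ((1/2 : ℝ)^n) :=
                hXnd n i
            _ = (ENNReal.ofReal (1/2 : ℝ))^n := ENNReal.ofReal_pow (by norm_num) n
        apply ne_top_of_le_ne_top _ hle
        rw [ENNReal.tsum_geometric]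
        apply ENNReal.inv_ne_top.2
        simp only [ne_eq, tsub_eq_zero_iff_le, not_le]
        exact ENNReal.ofReal_lt_one.2 (by norm_num)
      have hfin := ae_lt_top' (AEMeasurable.ennreal_tsum hmeas) hsum
      filter_upwards [hfin] with ω hω
      have h0 : Tendsto (fun n => (‖Xn n i ω - X₀ i ω‖₊ : ℝ≥0∞)) atTop (nhds 0) :=
        ENNReal.tendsto_atTop_zero_of_tsum_ne_top hω.ne
      have h1 : Tendsto (fun n => ‖Xn n i ω - X₀ i ω‖) atTop (nhds 0) := by
        have h2 := (ENNReal.tendsto_toReal (a := 0) ENNReal.zero_ne_top).comp h0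
        simpa [Function.comp_def] using h2
      exact tendsto_iff_norm_sub_tendsto_zero.2 h1
    -- Step 4 : truncation
    set Zn : ℕ → Fin d → (Ω →ₘ[μ] ℝ) := fun n i => (Xn n i ⊓ 0) ⊔ (X₀ i ⊓ 0) with hZndef
    have hZnXX : ∀ n, Zn n ∈ XX := fun n i =>
      (hLi i).sup_mem _ ((hLi i).inf_mem _ ((hXn n).1 i) _ (hLi i).zero_mem) _
        ((hLi i).inf_mem _ (hX₀ i) _ (hLi i).zero_mem)
    have hX₀inf : X₀ ⊓ 0 ∈ XX := hmeminf X₀ hX₀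
    have hcoeinf : ∀ i, ∀ᵐ ω ∂μ, (X₀ i ⊓ 0 : Ω →ₘ[μ] ℝ) ω = (X₀ i ω) ⊓ 0 := by
      intro i
      filter_upwards [AEEqFun.coeFn_inf (X₀ i) (0 : Ω →ₘ[μ] ℝ),
        AEEqFun.coeFn_zero (β := ℝ) (μ := μ)] with ω h1 h2
      show (X₀ i ⊓ (0 : Ω →ₘ[μ] ℝ)) ω = X₀ i ω ⊓ 0
      rw [h1, h2]
      simp
    have hcoeZn : ∀ i, ∀ᵐ ω ∂μ, ∀ n, Zn n i ω = (Xn n i ω ⊓ 0) ⊔ (X₀ i ω ⊓ 0) := by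
      intro i
      apply ae_all_iff.2
      intro n
      filter_upwards [AEEqFun.coeFn_sup (Xn n i ⊓ 0) (X₀ i ⊓ 0),
        AEEqFun.coeFn_inf (Xn n i) (0 : Ω →ₘ[μ] ℝ), AEEqFun.coeFn_inf (X₀ i) (0 : Ω →ₘ[μ] ℝ),
        AEEqFun.coeFn_zero (β := ℝ) (μ := μ)] with ω h1 h2 h3 h4
      show ((Xn n i ⊓ 0) ⊔ (X₀ i ⊓ 0) : Ω →ₘ[μ] ℝ) ω = (Xn n i ω ⊓ 0) ⊔ (X₀ i ω ⊓ 0)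
      rw [h1, h2, h3, h4]
      simp
    have hZtend : ∀ i, ∀ᵐ ω ∂μ, Tendsto (fun n => Zn n i ω) atTop
        (nhds ((X₀ i ⊓ 0 : Ω →ₘ[μ] ℝ) ω)) := by
      intro i
      filter_upwards [haeconv i, hcoeZn i, hcoeinf i] with ω h1 h2 h3
      have h4 : Tendsto (fun n => (Xn n i ω ⊓ 0) ⊔ (X₀ i ω ⊓ 0)) atTop
          (nhds ((X₀ i ω ⊓ 0) ⊔ (X₀ i ω ⊓ 0))) := by
        exact (h1.min tendsto_const_nhds).max tendsto_const_nhds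
      rw [sup_idem] at h4
      rw [h3]
      exact h4.congr (fun n => (h2 n).symm)
    have hsupmem : ∀ i, supAbsMem (Li i) (fun n => Zn n i) := by
      intro i
      refine ⟨-(X₀ i ⊓ 0), ?_, ?_⟩
      · have := (hLi i).smul_mem (-1 : ℝ) _ ((hLi i).inf_mem _ (hX₀ i) _ (hLi i).zero_mem)
        simpa using this
      · filter_upwards [hZtend i, hcoeZn i, hcoeinf i, AEEqFun.coeFn_neg (X₀ i ⊓ 0)]
          with ω h1 h2 h3 h4
        have hm : ∀ n, (X₀ i ω ⊓ 0) ≤ Zn n i ω ∧ Zn n i ω ≤ 0 := by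
          intro n
          rw [h2 n]
          exact ⟨le_sup_right, sup_le inf_le_right inf_le_right⟩
        have habs : ∀ n, |Zn n i ω| = -Zn n i ω := fun n => abs_of_nonpos (hm n).2
        have hbdd : BddAbove (Set.range fun n => |Zn n i ω|) := by
          refine ⟨-(X₀ i ω ⊓ 0), ?_⟩
          rintro x ⟨n, rfl⟩
          show |Zn n i ω| ≤ -(X₀ i ω ⊓ 0)
          rw [habs n]
          exact neg_le_neg (hm n).1
        refine ⟨hbdd, ?_⟩
        rw [h4, Pi.neg_apply, h3]
        apply le_antisymm
        · have htend2 : Tendsto (fun n => |Zn n i ω|) atTop (nhds (-(X₀ i ω ⊓ 0))) := by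
            have h5 := h1.neg
            rw [h3] at h5
            exact h5.congr (fun n => (habs n).symm)
          exact le_of_tendsto htend2 (Eventually.of_forall fun n => le_ciSup hbdd n)
        · exact ciSup_le fun n => by rw [habs n]; exact neg_le_neg (hm n).1
    -- Step 5 : Fatou property and reverse Fatou for integrals
    have hfat := hfatou Zn (X₀ ⊓ 0) hZnXX hX₀inf hZtend hsupmem
    have hZn_lb : ∀ n, X₀ ⊓ 0 ≤ Zn n := fun n i => le_sup_right
    have hZn_ub : ∀ n, Zn n ≤ 0 := fun n i => sup_le inf_le_right inf_le_right
    have hXninf_le : ∀ n, Xn n ⊓ 0 ≤ Zn n := fun n i => le_sup_left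
    have hcZn : ∀ n, c ≤ φ (Zn n) := by
      intro n
      have h1 : φ (Xn n) = φ (Xn n ⊓ 0) := by
        simp only [hφdef]
        rw [hsurplus (Xn n) (hXn n).1]
      calc c ≤ φ (Xn n) := (hXn n).2
        _ = φ (Xn n ⊓ 0) := h1
        _ ≤ φ (Zn n) := hφle _ (hmeminf _ (hXn n).1) _ (hZnXX n) (hXninf_le n)
    have hφsur : φ X₀ = φ (X₀ ⊓ 0) := by
      simp only [hφdef]
      rw [hsurplus X₀ hX₀]
    have hlBint : Integrable (fun ω => S (X₀ ⊓ 0) ω * W ω) μ := hSint _ hX₀inf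
    have huBint : Integrable (fun ω => S (0 : Fin d → (Ω →ₘ[μ] ℝ)) ω * W ω) μ := hSint _ h0XX
    have hSlow : ∀ n, ∀ᵐ ω ∂μ, S (X₀ ⊓ 0) ω ≤ S (Zn n) ω := fun n =>
      AEEqFun.coeFn_le.2 (hmono _ hX₀inf _ (hZnXX n) (hZn_lb n))
    have hSup2 : ∀ n, ∀ᵐ ω ∂μ, S (Zn n) ω ≤ S 0 ω := fun n =>
      AEEqFun.coeFn_le.2 (hmono _ (hZnXX n) _ h0XX (hZn_ub n))
    set vv : ℕ → Ω → ℝ≥0∞ :=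
      fun n ω => ENNReal.ofReal (S (Zn n) ω * W ω - S (X₀ ⊓ 0) ω * W ω) with hvvdef
    have hvmeas : ∀ n, Measurable (vv n) := by
      intro n
      apply ENNReal.measurable_ofReal.comp
      exact ((S (Zn n)).measurable.mul W.measurable).sub
        ((S (X₀ ⊓ 0)).measurable.mul W.measurable)
    have hvtend : ∀ᵐ ω ∂μ, Tendsto (fun n => vv n ω) atTop (nhds 0) := by
      filter_upwards [hfat, ae_all_iff.2 hSlow, ae_all_iff.2 hSup2, hWnn] with ω h1 h2 h3 h4
      have hbddabove : IsBoundedUnder (· ≤ ·) atTop (fun n => S (Zn n) ω) :=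
        isBoundedUnder_of ⟨S (0 : Fin d → (Ω →ₘ[μ] ℝ)) ω, h3⟩
      have hbddbelow : IsBoundedUnder (· ≥ ·) atTop (fun n => S (Zn n) ω) :=
        isBoundedUnder_of ⟨S (X₀ ⊓ 0) ω, h2⟩
      have hliminf : S (X₀ ⊓ 0) ω ≤ liminf (fun n => S (Zn n) ω) atTop :=
        le_liminf_of_le hbddabove.isCoboundedUnder_ge (Eventually.of_forall h2)
      have hb : Tendsto (fun n => S (Zn n) ω) atTop (nhds (S (X₀ ⊓ 0) ω)) :=
        tendsto_of_le_liminf_of_limsup_le hliminf h1 hbddabove hbddbelow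
      have hmul : Tendsto (fun n => S (Zn n) ω * W ω - S (X₀ ⊓ 0) ω * W ω) atTop (nhds 0) := by
        have h5 := (hb.mul_const (W ω)).sub_const (S (X₀ ⊓ 0) ω * W ω)
        simpa using h5
      have h6 : Tendsto (fun n => vv n ω) atTop (nhds (ENNReal.ofReal 0)) :=
        (ENNReal.continuous_ofReal.tendsto 0).comp hmul
      simpa using h6
    have hvlimsup : ∀ᵐ ω ∂μ, limsup (fun n => vv n ω) atTop = 0 :=
      hvtend.mono fun ω h => h.limsup_eq
    have hvbdd : ∀ n, vv n ≤ᵐ[μ]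
        fun ω => ENNReal.ofReal (S (0 : Fin d → (Ω →ₘ[μ] ℝ)) ω * W ω - S (X₀ ⊓ 0) ω * W ω) := by
      intro n
      filter_upwards [hSup2 n, hWnn] with ω h1 h2
      exact ENNReal.ofReal_le_ofReal (by nlinarith [mul_le_mul_of_nonneg_right h1 h2])
    have hgfin : ∫⁻ ω, ENNReal.ofReal
        (S (0 : Fin d → (Ω →ₘ[μ] ℝ)) ω * W ω - S (X₀ ⊓ 0) ω * W ω) ∂μ ≠ ⊤ := by
      have hint2 : Integrable
          (fun ω => S (0 : Fin d → (Ω →ₘ[μ] ℝ)) ω * W ω - S (X₀ ⊓ 0) ω * W ω) μ :=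
        huBint.sub hlBint
      have hle : ∀ ω, ENNReal.ofReal (S (0 : Fin d → (Ω →ₘ[μ] ℝ)) ω * W ω - S (X₀ ⊓ 0) ω * W ω)
          ≤ (‖S (0 : Fin d → (Ω →ₘ[μ] ℝ)) ω * W ω - S (X₀ ⊓ 0) ω * W ω‖₊ : ℝ≥0∞) := fun ω => by
        exact (ENNReal.ofReal_le_ofReal (le_abs_self _)).trans_eq (ofReal_norm (E := ℝ) _)
      exact ne_top_of_le_ne_top (ne_of_lt hint2.2) (lintegral_mono hle)
    have hlimsuplin : limsup (fun n => ∫⁻ ω, vv n ω ∂μ) atTop = 0 := by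
      have h1 := limsup_lintegral_le _ hvmeas hvbdd hgfin
      have h2 : ∫⁻ ω, limsup (fun n => vv n ω) atTop ∂μ = 0 := by
        rw [lintegral_congr_ae hvlimsup, lintegral_zero]
      exact le_antisymm (h2 ▸ h1) zero_le
    have htendlin : Tendsto (fun n => ∫⁻ ω, vv n ω ∂μ) atTop (nhds 0) := by
      apply tendsto_of_liminf_eq_limsup _ hlimsuplin
      exact le_antisymm (hlimsuplin ▸ liminf_le_limsup) zero_le
    have htoreal : Tendsto (fun n => (∫⁻ ω, vv n ω ∂μ).toReal) atTop (nhds 0) := by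
      have h1 := (ENNReal.tendsto_toReal (a := 0) ENNReal.zero_ne_top).comp htendlin
      simpa [Function.comp_def] using h1
    have hid : ∀ n, φ (Zn n) = (∫⁻ ω, vv n ω ∂μ).toReal + φ (X₀ ⊓ 0) := by
      intro n
      have hIn : Integrable (fun ω => S (Zn n) ω * W ω) μ := hSint _ (hZnXX n)
      have hnn : 0 ≤ᵐ[μ] fun ω => S (Zn n) ω * W ω - S (X₀ ⊓ 0) ω * W ω := by
        filter_upwards [hSlow n, hWnn] with ω h1 h2
        exact sub_nonneg.2 (mul_le_mul_of_nonneg_right h1 h2)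
      have heq := integral_eq_lintegral_of_nonneg_ae hnn ((hIn.sub hlBint).aestronglyMeasurable)
      rw [integral_sub hIn hlBint] at heq
      simp only [hφdef, hvvdef]
      linarith [heq]
    have hφtend : Tendsto (fun n => φ (Zn n)) atTop (nhds (φ (X₀ ⊓ 0))) := by
      have h1 := htoreal.add_const (φ (X₀ ⊓ 0))
      rw [zero_add] at h1
      exact Tendsto.congr (fun n => (hid n).symm) h1
    have hfinal : c ≤ φ (X₀ ⊓ 0) := ge_of_tendsto hφtend (Eventually.of_forall hcZn)
    show c ≤ φ X₀
    rw [hφsur]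
    exact hfinal

  -- conclude upper semicontinuity from closed superlevel sets
  refine upperSemicontinuous_iff.2 fun Xs => upperSemicontinuousAt_iff.2 fun y hXy => ?_
  have hmem : Xs ∈ (closure {Ys : ↥XX | y ≤ φ ↑Ys})ᶜ := by
    intro hmemc
    exact absurd (key y Xs hmemc) (not_le.2 hXy)
  have hnhds : (closure {Ys : ↥XX | y ≤ φ ↑Ys})ᶜ ∈ nhds Xs :=
    (isOpen_compl_iff.2 isClosed_closure).mem_nhds hmem
  filter_upwards [hnhds] with Zs hZs
  by_contra hcon
  exact hZs (subset_closure (not_lt.1 hcon))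


end SystemicRisk
end
end

section
/- Let S : X → E be an admissible impact map, A ⊂ E an admissible acceptance set, and ρ(X) = inf{Σ_{i=1}^d m_i : m ∈ ℝ^d, S(X+m) ∈ A}. If ρ is σ(X,X')-lower semicontinuous, then ρ is proper (i.e. ρ never attains the value −∞ and ρ is finite at some point) if and only if ρ(0) > −∞. -/
open MeasureTheory Filter Set
open scoped ENNReal

noncomputable section

namespace SystemicRisk

variable {Ω : Type*} [MeasurableSpace Ω]

variable {d : ℕ}

section Aux

variable {μ : Measure Ω} {d : ℕ}

lemma cvec_zero : cvec μ (0 : Fin d → ℝ) = 0 := by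
  funext i
  show (AEEqFun.const Ω ((0 : Fin d → ℝ) i) : Ω →ₘ[μ] ℝ) = 0
  refine AEEqFun.ext ?_
  filter_upwards [AEEqFun.coeFn_const (μ := μ) Ω ((0 : Fin d → ℝ) i),
    AEEqFun.coeFn_zero (β := ℝ) (μ := μ)] with ω h1 h2
  simp only [Pi.zero_apply, Function.const_apply] at h1
  simp [h1, h2]

lemma cvec_smul (t : ℝ) (m : Fin d → ℝ) : cvec μ (t • m) = t • cvec μ m := by
  funext i
  show (AEEqFun.const Ω ((t • m) i) : Ω →ₘ[μ] ℝ) = t • AEEqFun.const Ω (m i)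
  refine AEEqFun.ext ?_
  filter_upwards [AEEqFun.coeFn_const (μ := μ) Ω ((t • m) i),
    AEEqFun.coeFn_smul t (AEEqFun.const Ω (m i) : Ω →ₘ[μ] ℝ),
    AEEqFun.coeFn_const (μ := μ) Ω (m i)] with ω h1 h2 h3
  simp only [Pi.smul_apply, smul_eq_mul, Function.const_apply] at h1
  simp [h1, h2, h3]

lemma ip_smul_left (t : ℝ) (f g : Ω →ₘ[μ] ℝ) : ip (t • f) g = t * ip f g := by
  unfold ip
  rw [show t * ∫ ω, f ω * g ω ∂μ = ∫ ω, t * (f ω * g ω) ∂μ by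
    simpa using (integral_smul t fun ω => f ω * g ω).symm]
  refine integral_congr_ae ?_
  filter_upwards [AEEqFun.coeFn_smul t f] with ω h
  simp [h, mul_assoc]

lemma pairing_smul_left (t : ℝ) (X Z : Fin d → (Ω →ₘ[μ] ℝ)) :
    pairing (t • X) Z = t * pairing X Z := by
  unfold pairing
  rw [Finset.mul_sum]
  exact Finset.sum_congr rfl fun i _ => ip_smul_left t (X i) (Z i)

lemma rho_le {S : (Fin d → (Ω →ₘ[μ] ℝ)) → (Ω →ₘ[μ] ℝ)} {A : Set (Ω →ₘ[μ] ℝ)}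
    {X : Fin d → (Ω →ₘ[μ] ℝ)} {m : Fin d → ℝ}
    (hm : S (X + cvec μ m) ∈ A) : rho μ S A X ≤ ((∑ i, m i : ℝ) : EReal) :=
  iInf₂_le m hm

variable {Li : Fin d → Set (Ω →ₘ[μ] ℝ)} {nrmX : Fin d → ((Ω →ₘ[μ] ℝ) → ℝ)}

lemma zero_mem_prod (hLi : ∀ i, IsAdmissible (Li i) (nrmX i)) :
    (0 : Fin d → (Ω →ₘ[μ] ℝ)) ∈ prodSet Li := fun i => (hLi i).zero_mem

lemma cvec_mem (hLi : ∀ i, IsAdmissible (Li i) (nrmX i)) (m : Fin d → ℝ) :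
    cvec μ m ∈ prodSet Li := fun i =>
  (hLi i).linfty_subset _ ⟨|m i|, by
    filter_upwards [AEEqFun.coeFn_const (μ := μ) Ω (m i)] with ω h
    simp [cvec, h]⟩

lemma prod_smul_mem (hLi : ∀ i, IsAdmissible (Li i) (nrmX i))
    {X : Fin d → (Ω →ₘ[μ] ℝ)} (hX : X ∈ prodSet Li) (t : ℝ) :
    t • X ∈ prodSet Li := fun i => (hLi i).smul_mem t _ (hX i)

lemma prod_add_cvec_mem (hLi : ∀ i, IsAdmissible (Li i) (nrmX i))
    {X : Fin d → (Ω →ₘ[μ] ℝ)} (hX : X ∈ prodSet Li) (m : Fin d → ℝ) :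
    X + cvec μ m ∈ prodSet Li := fun i =>
  (hLi i).add_mem _ (hX i) _ (cvec_mem hLi m i)

lemma key_scale {EE : Set (Ω →ₘ[μ] ℝ)} {nrmE : (Ω →ₘ[μ] ℝ) → ℝ}
    {S : (Fin d → (Ω →ₘ[μ] ℝ)) → (Ω →ₘ[μ] ℝ)} {A : Set (Ω →ₘ[μ] ℝ)}
    (hLi : ∀ i, IsAdmissible (Li i) (nrmX i))
    (hE : IsAdmissible EE nrmE)
    (hS : IsAdmissibleImpact (prodSet Li) (prodSet fun i => kdual (Li i)) EE (kdual EE) S)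
    (hA : IsAdmissibleAcceptance (prodSet Li) EE (kdual EE) S A)
    {X : Fin d → (Ω →ₘ[μ] ℝ)} (hX : X ∈ prodSet Li) {m : Fin d → ℝ}
    (hm : S (X + cvec μ m) ∈ A) {t : ℝ} (ht0 : 0 ≤ t) (ht1 : t ≤ 1) :
    S (t • X + cvec μ (t • m)) ∈ A := by
  have h0 : (0 : Fin d → (Ω →ₘ[μ] ℝ)) ∈ prodSet Li := zero_mem_prod hLi
  have hXm : X + cvec μ m ∈ prodSet Li := prod_add_cvec_mem hLi hX m
  have hcc := hS.concave (X + cvec μ m) hXm 0 h0 t ht0 ht1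
  simp only [hS.normalized, smul_zero, add_zero, smul_add] at hcc
  rw [← cvec_smul] at hcc
  -- hcc : t • S (X + cvec μ m) ≤ S (t • X + cvec μ (t • m))
  have hmem : t • X + cvec μ (t • m) ∈ prodSet Li :=
    prod_add_cvec_mem hLi (prod_smul_mem hLi hX t) (t • m)
  have hSmem : S (t • X + cvec μ (t • m)) ∈ EE := hS.mapsTo _ hmem
  have hU : t • S (X + cvec μ m) ∈ A := by
    have := hA.convex _ hm _ hA.zero_mem t ht0 ht1
    simpa using this
  have hUE : t • S (X + cvec μ m) ∈ EE := hE.smul_mem t _ (hS.mapsTo _ hXm)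
  have hVE : S (t • X + cvec μ (t • m)) - t • S (X + cvec μ m) ∈ EE := by
    have := hE.add_mem _ hSmem _ (hE.smul_mem (-1) _ hUE)
    simpa [sub_eq_add_neg] using this
  have hVpos : (0 : Ω →ₘ[μ] ℝ) ≤ S (t • X + cvec μ (t • m)) - t • S (X + cvec μ m) := by
    rw [← AEEqFun.coeFn_le] at hcc ⊢
    filter_upwards [AEEqFun.coeFn_sub (S (t • X + cvec μ (t • m))) (t • S (X + cvec μ m)),
      AEEqFun.coeFn_zero (β := ℝ) (μ := μ), hcc] with ω h1 h2 h3
    simp [h1, h2, sub_nonneg, h3]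
  have hfin := hA.mono _ hU _ hVE hVpos
  have heq : t • S (X + cvec μ m) + (S (t • X + cvec μ (t • m)) - t • S (X + cvec μ m))
      = S (t • X + cvec μ (t • m)) := by abel
  rwa [heq] at hfin

end Aux

/-- if `ρ` is `σ(X,X')`-lower semicontinuous then it is proper iff `ρ(0) > −∞`. -/
theorem statement3 {μ : Measure Ω} [IsProbabilityMeasure μ] {d : ℕ}
    (Li : Fin d → Set (Ω →ₘ[μ] ℝ)) (nrmX : Fin d → ((Ω →ₘ[μ] ℝ) → ℝ))
    (EE : Set (Ω →ₘ[μ] ℝ)) (nrmE : (Ω →ₘ[μ] ℝ) → ℝ)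
    (S : (Fin d → (Ω →ₘ[μ] ℝ)) → (Ω →ₘ[μ] ℝ)) (A : Set (Ω →ₘ[μ] ℝ))
    (hLi : ∀ i, IsAdmissible (Li i) (nrmX i))
    (hE : IsAdmissible EE nrmE)
    (hS : IsAdmissibleImpact (prodSet Li) (prodSet fun i => kdual (Li i)) EE (kdual EE) S)
    (hA : IsAdmissibleAcceptance (prodSet Li) EE (kdual EE) S A)
    (hlsc : @LowerSemicontinuous (↥(prodSet Li)) EReal
        (wtop (prodSet Li) (prodSet fun i => kdual (Li i))) _
        (fun X : ↥(prodSet Li) => rho μ S A (X : Fin d → (Ω →ₘ[μ] ℝ)))) :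
    ProperOn (prodSet Li) (rho μ S A) ↔ ⊥ < rho μ S A 0 := by
  classical
  have h0mem : (0 : Fin d → (Ω →ₘ[μ] ℝ)) ∈ prodSet Li := zero_mem_prod hLi
  constructor
  · intro hp
    exact bot_lt_iff_ne_bot.mpr (hp.1 0 h0mem)
  · intro h0
    constructor
    · intro X hX hbot
      -- step 1: unbounded below
      have hex : ∀ c : ℝ, ∃ m : Fin d → ℝ, S (X + cvec μ m) ∈ A ∧ ∑ i, m i < c := by
        intro c
        by_contra hco
        push_neg at hco
        have hle : ((c : ℝ) : EReal) ≤ rho μ S A X := by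
          refine le_iInf₂ fun m hm => ?_
          exact_mod_cast hco m hm
        rw [hbot] at hle
        exact absurd hle (by simp)
      -- step 2: rho (t • X) = ⊥ for t ∈ (0,1]
      have hsc : ∀ t : ℝ, 0 < t → t ≤ 1 → rho μ S A (t • X) = ⊥ := by
        intro t ht0 ht1
        by_contra hne
        obtain ⟨c, -, hc2⟩ := EReal.exists_between_coe_real (bot_lt_iff_ne_bot.mpr hne)
        obtain ⟨m, hm, hsum⟩ := hex (c / t)
        have hkey := key_scale hLi hE hS hA hX hm ht0.le ht1
        have hle : rho μ S A (t • X) ≤ ((∑ i, (t • m) i : ℝ) : EReal) := rho_le hkey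
        have h1 : (∑ i, (t • m) i : ℝ) = t * ∑ i, m i := by
          simp [Finset.mul_sum]
        have h2 : t * ∑ i, m i < c := by
          rw [mul_comm]
          exact (lt_div_iff₀ ht0).mp hsum
        have h3 : rho μ S A (t • X) < ((c : ℝ) : EReal) := by
          refine hle.trans_lt ?_
          rw [h1]
          exact_mod_cast h2
        exact absurd (h3.trans hc2) (lt_irrefl _)
      -- step 3: continuity of the segment and lower semicontinuity
      have hmemt : ∀ t : ℝ, t • X ∈ prodSet Li := fun t => prod_smul_mem hLi hX t
      set D := prodSet (fun i => kdual (Li i)) with hD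
      let γ : ℝ → ↥(prodSet Li) := fun t => ⟨t • X, hmemt t⟩
      have hγ0 : ((γ 0 : ↥(prodSet Li)) : Fin d → (Ω →ₘ[μ] ℝ)) = 0 := zero_smul ℝ X
      have hcont : @Continuous ℝ ↥(prodSet Li) _ (wtop (prodSet Li) D) γ := by
        rw [wtop]
        refine continuous_induced_rng.mpr ?_
        refine continuous_pi fun Z => ?_
        have heq : (fun t : ℝ =>
            pairing ((γ t : ↥(prodSet Li)) : Fin d → (Ω →ₘ[μ] ℝ)) (Z : Fin d → (Ω →ₘ[μ] ℝ)))
            = fun t : ℝ => t * pairing X (Z : Fin d → (Ω →ₘ[μ] ℝ)) :=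
          funext fun t => pairing_smul_left t X _
        show Continuous fun t : ℝ =>
          pairing ((γ t : ↥(prodSet Li)) : Fin d → (Ω →ₘ[μ] ℝ)) (Z : Fin d → (Ω →ₘ[μ] ℝ))
        rw [heq]
        exact continuous_id.mul continuous_const
      have htend : Filter.Tendsto γ (nhdsWithin (0 : ℝ) (Set.Ioi 0))
          (@nhds _ (wtop (prodSet Li) D) (γ 0)) :=
        ((@Continuous.tendsto ℝ ↥(prodSet Li) _ (wtop (prodSet Li) D) γ hcont 0).mono_left
          nhdsWithin_le_nhds)
      have hbotlt : ⊥ < rho μ S A ((γ 0 : ↥(prodSet Li)) : Fin d → (Ω →ₘ[μ] ℝ)) := by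
        rw [hγ0]; exact h0
      have hlsc0 : ∀ᶠ x' in @nhds _ (wtop (prodSet Li) D) (γ 0),
          ⊥ < rho μ S A ((x' : ↥(prodSet Li)) : Fin d → (Ω →ₘ[μ] ℝ)) :=
        hlsc (γ 0) ⊥ hbotlt
      have hev1 : ∀ᶠ t in nhdsWithin (0 : ℝ) (Set.Ioi 0),
          ⊥ < rho μ S A (t • X) := htend.eventually hlsc0
      have hev2 : ∀ᶠ t in nhdsWithin (0 : ℝ) (Set.Ioi 0), t ∈ Set.Ioo (0 : ℝ) 1 :=
        Ioo_mem_nhdsGT_of_mem ⟨le_refl 0, one_pos⟩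
      obtain ⟨t, ht1, ht2⟩ := (hev1.and hev2).exists
      rw [hsc t ht2.1 ht2.2.le] at ht1
      exact lt_irrefl _ ht1
    · obtain ⟨X, hX, hSX⟩ := hA.preimage_nonempty
      refine ⟨X, hX, ?_⟩
      have hle : rho μ S A X ≤ ((∑ _i : Fin d, (0 : ℝ) : ℝ) : EReal) :=
        rho_le (m := 0) (by rw [cvec_zero, add_zero]; exact hSX)
      intro htop
      rw [htop] at hle
      simp at hle


end SystemicRisk
end
end
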